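/- arXiv:2203.06484 — 4 statements merged into one kernel-verified Lean document; each statement's English description precedes it below -/
import Mathlib

section
/- The root-counting function λ ↦ p(λ) is locally constant on the open set ℂ ∖ a(𝕋): for every λ₀ ∉ a(𝕋) there is an open neighborhood of λ₀ on which p(λ) = p(λ₀). In particular, p is constant on each connected component of ℂ ∖ a(𝕋). -/
open scoped ENNReal

noncomputable section

/-- The polynomial `b_λ(z) = z^m (a(z) - λ) = ∑_{k=0}^{m+n} a_{k-m} z^k - λ z^m`. -/
def bpoly (m n : ℕ) (a : ℤ → ℂ) (lam : ℂ) : Polynomial ℂ :=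
  (∑ k ∈ Finset.range (m + n + 1), Polynomial.C (a ((k : ℤ) - (m : ℤ))) * Polynomial.X ^ k)
    - Polynomial.C lam * Polynomial.X ^ m

/-- `p(λ)`: the number of roots of `b_λ` in the open unit disk, counted with multiplicity. -/
def rootCount (m n : ℕ) (a : ℤ → ℂ) (lam : ℂ) : ℕ :=
  Multiset.card ((bpoly m n a lam).roots.filter fun z => ‖z‖ < 1)

/-- The value `a(z) = ∑_{k=-m}^{n} a_k z^k` of the Laurent polynomial. -/
def aval (m n : ℕ) (a : ℤ → ℂ) (z : ℂ) : ℂ :=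
  ∑ k ∈ Finset.Icc (-(m : ℤ)) (n : ℤ), a k * z ^ k

/-- The image `a(𝕋)` of the unit circle under the Laurent polynomial `a`. -/
def aCircle (m n : ℕ) (a : ℤ → ℂ) : Set ℂ :=
  {w : ℂ | ∃ z : ℂ, ‖z‖ = 1 ∧ aval m n a z = w}

/-- The Hilbert space `ℓ²` of square-summable complex sequences (0-indexed). -/
abbrev ell2 := lp (fun _ : ℕ => ℂ) 2


section Aux
open Polynomial Finset

def Qp (L : List ℂ) : Polynomial ℂ := (L.map (fun z => X - C z)).prod

lemma Qp_nil : Qp [] = 1 := rfl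

lemma Qp_cons (x : ℂ) (L : List ℂ) : Qp (x :: L) = (X - C x) * Qp L := by
  simp [Qp]

lemma monic_Qp (L : List ℂ) : (Qp L).Monic := by
  induction L with
  | nil => exact monic_one
  | cons x L ih => rw [Qp_cons]; exact (monic_X_sub_C x).mul ih

lemma natDegree_Qp (L : List ℂ) : (Qp L).natDegree = L.length := by
  induction L with
  | nil => simp [Qp_nil]
  | cons x L ih =>
    rw [Qp_cons, natDegree_mul (X_sub_C_ne_zero x) (monic_Qp L).ne_zero,
      natDegree_X_sub_C, ih, List.length_cons]
    omega

lemma eval_Qp (w : ℂ) (L : List ℂ) : (Qp L).eval w = (L.map (fun z => w - z)).prod := by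
  induction L with
  | nil => simp [Qp_nil]
  | cons x L ih => simp [Qp_cons, ih]

lemma eval_Qp_mem {w : ℂ} {L : List ℂ} (h : w ∈ L) : (Qp L).eval w = 0 := by
  rw [eval_Qp]
  exact List.prod_eq_zero (List.mem_map.mpr ⟨w, h, sub_self w⟩)

-- coefficient recurrence
lemma coeff_X_sub_C_mul (x : ℂ) (q : ℂ[X]) (i : ℕ) :
    ((X - C x) * q).coeff (i + 1) = q.coeff i - x * q.coeff (i + 1) := by
  rw [sub_mul, coeff_sub, coeff_X_mul, coeff_C_mul]

lemma coeff_X_sub_C_mul_zero (x : ℂ) (q : ℂ[X]) :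
    ((X - C x) * q).coeff 0 = - (x * q.coeff 0) := by
  rw [sub_mul, coeff_sub, coeff_C_mul, mul_coeff_zero, coeff_X_zero, zero_mul, zero_sub]

-- sup-norm bound of coefficients in terms of root bound
lemma coeff_Qp_bound {B : ℝ} (hB : 0 ≤ B) (L : List ℂ) (h : ∀ z ∈ L, ‖z‖ ≤ B) (i : ℕ) :
    ‖(Qp L).coeff i‖ ≤ (1 + B) ^ L.length := by
  induction L generalizing i with
  | nil =>
    simp only [Qp, List.map_nil, List.prod_nil, coeff_one]
    split <;> simp
  | cons x L ih =>
    have hx : ‖x‖ ≤ B := h x (List.mem_cons_self)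
    have hL : ∀ z ∈ L, ‖z‖ ≤ B := fun z hz => h z (List.mem_cons_of_mem _ hz)
    have h1B : (0:ℝ) ≤ 1 + B := by linarith
    rw [Qp_cons, List.length_cons, pow_succ']
    cases i with
    | zero =>
      rw [coeff_X_sub_C_mul_zero, norm_neg, norm_mul]
      calc ‖x‖ * ‖(Qp L).coeff 0‖ ≤ B * (1+B) ^ L.length :=
            mul_le_mul hx (ih hL 0) (norm_nonneg _) hB
        _ ≤ (1+B) * (1+B) ^ L.length := by nlinarith [pow_nonneg h1B L.length]
    | succ i =>
      rw [_root_.coeff_X_sub_C_mul]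
      calc ‖(Qp L).coeff i - x * (Qp L).coeff (i+1)‖
          ≤ ‖(Qp L).coeff i‖ + ‖x * (Qp L).coeff (i+1)‖ := norm_sub_le _ _
        _ = ‖(Qp L).coeff i‖ + ‖x‖ * ‖(Qp L).coeff (i+1)‖ := by rw [norm_mul]
        _ ≤ (1+B)^L.length + B * (1+B)^L.length := by
            have := ih hL i; have := ih hL (i+1)
            have := mul_le_mul hx (ih hL (i+1)) (norm_nonneg _) hB
            linarith
        _ = (1+B) * (1+B)^L.length := by ring

-- synthetic division: recover coefficients of q from those of (X - C x) * q
lemma coeff_of_mul_X_sub_C (x : ℂ) (q : ℂ[X]) (d : ℕ) (hq : q.natDegree ≤ d) (i : ℕ) :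
    q.coeff i = ∑ k ∈ range (d + 1), x ^ k * ((X - C x) * q).coeff (i + 1 + k) := by
  have key : ∀ j : ℕ, q.coeff i =
      x ^ j * q.coeff (i + j) + ∑ k ∈ range j, x ^ k * ((X - C x) * q).coeff (i + 1 + k) := by
    intro j
    induction j with
    | zero => simp
    | succ j ih =>
      rw [ih, sum_range_succ]
      have : q.coeff (i + j) = ((X - C x) * q).coeff (i + j + 1) + x * q.coeff (i + j + 1) := by
        rw [coeff_X_sub_C_mul]; ring
      rw [this]
      have e1 : i + 1 + j = i + j + 1 := by omega
      have e2 : i + (j + 1) = i + j + 1 := by omega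
      rw [e1, e2]
      ring
  have h0 : q.coeff (i + (d + 1)) = 0 := coeff_eq_zero_of_natDegree_lt (by omega)
  have := key (d + 1)
  rw [h0, mul_zero, zero_add] at this
  exact this

-- Cauchy root bound
lemma root_bound {q : ℂ[X]} (hm : q.Monic) {w : ℂ} (hw : q.eval w = 0) {Cb : ℝ}
    (hC : ∑ i ∈ range q.natDegree, ‖q.coeff i‖ ≤ Cb) : ‖w‖ ≤ max 1 Cb := by
  by_contra hcon
  push_neg at hcon
  have h1 : 1 < ‖w‖ := lt_of_le_of_lt (le_max_left _ _) hcon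
  have h2 : Cb < ‖w‖ := lt_of_le_of_lt (le_max_right _ _) hcon
  set D := q.natDegree with hD
  have hD1 : 1 ≤ D := by
    rcases Nat.eq_zero_or_pos D with h | h
    · exfalso
      have : q = 1 := hm.natDegree_eq_zero.mp h
      rw [this] at hw; simp at hw
    · exact h
  have heval : q.eval w = ∑ i ∈ range (D + 1), q.coeff i * w ^ i := eval_eq_sum_range w
  rw [sum_range_succ, hm.coeff_natDegree, one_mul] at heval
  have hwD : w ^ D = - ∑ i ∈ range D, q.coeff i * w ^ i := by
    rw [hw] at heval; linear_combination -heval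
  have hb : ‖w‖ ^ D ≤ Cb * ‖w‖ ^ (D - 1) := by
    calc ‖w‖ ^ D = ‖w ^ D‖ := (norm_pow w D).symm
      _ = ‖∑ i ∈ range D, q.coeff i * w ^ i‖ := by rw [hwD, norm_neg]
      _ ≤ ∑ i ∈ range D, ‖q.coeff i‖ * ‖w‖ ^ i := by
          refine (norm_sum_le _ _).trans (le_of_eq ?_)
          simp [norm_mul, norm_pow]
      _ ≤ ∑ i ∈ range D, ‖q.coeff i‖ * ‖w‖ ^ (D - 1) := by
          refine sum_le_sum fun i hi => ?_
          exact mul_le_mul_of_nonneg_left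
            (pow_le_pow_right₀ h1.le (by have := Finset.mem_range.mp hi; omega)) (norm_nonneg _)
      _ = (∑ i ∈ range D, ‖q.coeff i‖) * ‖w‖ ^ (D - 1) := by rw [sum_mul]
      _ ≤ Cb * ‖w‖ ^ (D - 1) := by
          exact mul_le_mul_of_nonneg_right hC (pow_nonneg (by linarith) _)
  have hpow : ‖w‖ ^ D = ‖w‖ * ‖w‖ ^ (D - 1) := by
    conv_lhs => rw [show D = 1 + (D - 1) by omega, pow_add, pow_one]
  rw [hpow] at hb
  have hwpos : 0 < ‖w‖ ^ (D - 1) := pow_pos (by linarith) _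
  nlinarith

lemma exists_pos_forall_list {α : Type*} (L : List α) (P : α → ℝ → Prop)
    (hmono : ∀ x δ δ', 0 < δ' → δ' ≤ δ → P x δ → P x δ')
    (h : ∀ x ∈ L, ∃ δ, 0 < δ ∧ P x δ) : ∃ δ, 0 < δ ∧ ∀ x ∈ L, P x δ := by
  induction L with
  | nil => exact ⟨1, one_pos, by simp⟩
  | cons y L ih =>
    obtain ⟨δ1, hδ1, h1⟩ := h y (List.mem_cons_self)
    obtain ⟨δ2, hδ2, h2⟩ := ih (fun x hx => h x (List.mem_cons_of_mem _ hx))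
    refine ⟨min δ1 δ2, lt_min hδ1 hδ2, ?_⟩
    intro x hx
    rcases List.mem_cons.mp hx with rfl | hx
    · exact hmono _ _ _ (lt_min hδ1 hδ2) (min_le_left _ _) h1
    · exact hmono _ _ _ (lt_min hδ1 hδ2) (min_le_right _ _) (h2 x hx)

lemma list_prod_ge {c : ℝ} (hc : 0 ≤ c) (l : List ℝ) (h : ∀ x ∈ l, c ≤ x) :
    c ^ l.length ≤ l.prod := by
  induction l with
  | nil => simp
  | cons x l ih =>
    have hx := h x (List.mem_cons_self)
    have ihx := ih (fun y hy => h y (List.mem_cons_of_mem _ hy))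
    rw [List.length_cons, List.prod_cons, pow_succ']
    exact mul_le_mul hx ihx (pow_nonneg hc _) (le_trans hc hx)

lemma norm_list_prod (l : List ℂ) : ‖l.prod‖ = (l.map (fun z => ‖z‖)).prod := by
  induction l <;> simp [*]

lemma Qp_perm {L1 L2 : List ℂ} (h : L1.Perm L2) : Qp L1 = Qp L2 := List.Perm.prod_eq (h.map _)










lemma aux_frac {c x : ℝ} (hc : 0 ≤ c) (hx : 0 ≤ x) : c * (x / (2 * (c + 1))) ≤ x / 2 := by
  rw [mul_comm, div_mul_eq_mul_div, div_le_div_iff₀ (by positivity) two_pos]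
  nlinarith

set_option maxHeartbeats 3000000 in
theorem roots_match : ∀ (d : ℕ) (R : List ℂ), R.length = d → ∀ ε : ℝ, 0 < ε →
    ∃ δ : ℝ, 0 < δ ∧ ∀ S : List ℂ, S.length = d →
      (∀ i, ‖(Qp S).coeff i - (Qp R).coeff i‖ ≤ δ) →
      ∃ R' S' : List ℂ, R'.Perm R ∧ S'.Perm S ∧
        List.Forall₂ (fun z w => ‖z - w‖ < ε) R' S' := by
  intro d
  induction d with
  | zero =>
    intro R hR ε hε
    refine ⟨1, one_pos, fun S hS _ => ?_⟩
    rw [List.length_eq_zero_iff] at hR hS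
    exact ⟨[], [], by simp [hR], by simp [hS], List.Forall₂.nil⟩
  | succ d ih =>
    intro R hR ε hε
    -- root bound B
    set A : ℝ := ∑ i ∈ range (d + 1), ‖(Qp R).coeff i‖ with hA
    set B : ℝ := max 1 (A + (d + 1 : ℝ)) with hB
    have hB1 : (1 : ℝ) ≤ B := le_max_left _ _
    have hB0 : (0 : ℝ) ≤ B := by linarith
    have hAnn : 0 ≤ A := sum_nonneg fun i _ => norm_nonneg _
    set M : ℝ := (1 + B) ^ (d + 1) with hM
    have hM1 : (1 : ℝ) ≤ M := one_le_pow₀ (by linarith)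
    set ε₀ : ℝ := min ε 1 with hε₀
    have hε₀pos : 0 < ε₀ := lt_min hε one_pos
    have hε₀1 : ε₀ ≤ 1 := min_le_right _ _
    -- δ₁ from inductive hypothesis, uniform over which root of R gets removed
    obtain ⟨δ₁, hδ₁pos, hδ₁⟩ := exists_pos_forall_list R
      (fun z0 δ => ∀ S0 : List ℂ, S0.length = d →
        (∀ i, ‖(Qp S0).coeff i - (Qp (R.erase z0)).coeff i‖ ≤ δ) →
        ∃ R' S' : List ℂ, R'.Perm (R.erase z0) ∧ S'.Perm S0 ∧
          List.Forall₂ (fun z w => ‖z - w‖ < ε₀) R' S')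
      (fun x δ δ' hδ' hle hP S0 h1 h2 => hP S0 h1 fun i => le_trans (h2 i) hle)
      (fun z0 hz0 => ih (R.erase z0) (by simp [List.length_erase_of_mem hz0, hR]) ε₀ hε₀pos)
    set C1 : ℝ := ((d:ℝ) + 1) ^ 2 * B ^ d * M with hC1
    set C2 : ℝ := ((d:ℝ) + 1) * B ^ d with hC2
    have hC1pos : 0 < C1 + 1 := by positivity
    have hC2pos : 0 < C2 + 1 := by positivity
    set ε'' : ℝ := min ε₀ (δ₁ / (2 * (C1 + 1))) with hε''
    have hε''pos : 0 < ε'' := lt_min hε₀pos (by positivity)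
    set K : ℝ := ((d:ℝ) + 2) * B ^ (d + 1) with hK
    have hKpos : 0 < K + 1 := by positivity
    refine ⟨min 1 (min (δ₁ / (2 * (C2 + 1))) (ε'' ^ (d + 1) / (K + 1))), by positivity, ?_⟩
    set δ : ℝ := min 1 (min (δ₁ / (2 * (C2 + 1))) (ε'' ^ (d + 1) / (K + 1))) with hδdef
    have hδpos : 0 < δ := by positivity
    have hδ1' : δ ≤ 1 := min_le_left _ _
    have hδa : δ ≤ δ₁ / (2 * (C2 + 1)) := le_trans (min_le_right _ _) (min_le_left _ _)
    have hδb : δ ≤ ε'' ^ (d + 1) / (K + 1) := le_trans (min_le_right _ _) (min_le_right _ _)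
    intro S hS hclose
    -- S is nonempty
    obtain ⟨w, S'', rfl⟩ : ∃ w S'', S = w :: S'' := by
      cases S with
      | nil => simp at hS
      | cons w S'' => exact ⟨w, S'', rfl⟩
    have hS'' : S''.length = d := by simpa using hS
    -- bound on roots of Qp S
    have hcoeffS : ∀ i, ‖(Qp (w :: S'')).coeff i‖ ≤ ‖(Qp R).coeff i‖ + 1 := by
      intro i
      calc ‖(Qp (w :: S'')).coeff i‖
          ≤ ‖(Qp (w :: S'')).coeff i - (Qp R).coeff i‖ + ‖(Qp R).coeff i‖ := by
            simpa using norm_add_le ((Qp (w :: S'')).coeff i - (Qp R).coeff i) ((Qp R).coeff i)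
        _ ≤ ‖(Qp R).coeff i‖ + 1 := by
            have := le_trans (hclose i) hδ1'; linarith
    have hwB : ‖w‖ ≤ B := by
      rw [hB]
      refine root_bound (q := Qp (w :: S'')) (monic_Qp _) (eval_Qp_mem (List.mem_cons_self)) ?_
      rw [natDegree_Qp, hS]
      calc ∑ i ∈ range (d + 1), ‖(Qp (w :: S'')).coeff i‖
          ≤ ∑ i ∈ range (d + 1), (‖(Qp R).coeff i‖ + 1) := sum_le_sum fun i _ => hcoeffS i
        _ = A + (d + 1 : ℝ) := by rw [sum_add_distrib, hA]; simp
    have hSB : ∀ z ∈ w :: S'', ‖z‖ ≤ B := by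
      intro z hz
      rw [hB]
      refine root_bound (q := Qp (w :: S'')) (monic_Qp _) (eval_Qp_mem hz) ?_
      rw [natDegree_Qp, hS]
      calc ∑ i ∈ range (d + 1), ‖(Qp (w :: S'')).coeff i‖
          ≤ ∑ i ∈ range (d + 1), (‖(Qp R).coeff i‖ + 1) := sum_le_sum fun i _ => hcoeffS i
        _ = A + (d + 1 : ℝ) := by rw [sum_add_distrib, hA]; simp
    have hRB : ∀ z ∈ R, ‖z‖ ≤ B := by
      intro z hz
      rw [hB]
      refine root_bound (q := Qp R) (monic_Qp _) (eval_Qp_mem hz) ?_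
      rw [natDegree_Qp, hR]
      have : (0:ℝ) ≤ (d + 1 : ℝ) := by positivity
      calc ∑ i ∈ range (d + 1), ‖(Qp R).coeff i‖ = A := rfl
        _ ≤ A + (d + 1 : ℝ) := by linarith
    have hMB : ∀ i, ‖(Qp R).coeff i‖ ≤ M := by
      intro i
      have := coeff_Qp_bound hB0 R hRB i
      rwa [hR] at this
    -- eval of Qp R at w is small
    have hevalsmall : ‖(Qp R).eval w‖ < ε'' ^ (d + 1) := by
      have h1 : (Qp R).eval w = (Qp R).eval w - (Qp (w :: S'')).eval w := by
        rw [eval_Qp_mem (List.mem_cons_self), sub_zero]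
      have hdR : (Qp R).natDegree = d + 1 := by rw [natDegree_Qp, hR]
      have hdS : (Qp (w :: S'')).natDegree = d + 1 := by rw [natDegree_Qp, hS]
      have h2 : (Qp R).eval w - (Qp (w :: S'')).eval w
          = ∑ i ∈ range (d + 2), ((Qp R).coeff i - (Qp (w :: S'')).coeff i) * w ^ i := by
        rw [eval_eq_sum_range, eval_eq_sum_range, hdR, hdS, ← sum_sub_distrib]
        congr 1; ext i; ring
      calc ‖(Qp R).eval w‖ = ‖∑ i ∈ range (d + 2), ((Qp R).coeff i - (Qp (w :: S'')).coeff i) * w ^ i‖ := by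
            rw [h1, h2]
        _ ≤ ∑ i ∈ range (d + 2), ‖(Qp R).coeff i - (Qp (w :: S'')).coeff i‖ * ‖w‖ ^ i := by
            refine (norm_sum_le _ _).trans (le_of_eq ?_)
            congr 1; ext i; rw [norm_mul, norm_pow]
        _ ≤ ∑ i ∈ range (d + 2), δ * B ^ (d + 1) := by
            refine sum_le_sum fun i hi => ?_
            have hi' : i ≤ d + 1 := by have := mem_range.mp hi; omega
            have e1 : ‖(Qp R).coeff i - (Qp (w :: S'')).coeff i‖ ≤ δ := by
              rw [norm_sub_rev]; exact hclose i
            have e2 : ‖w‖ ^ i ≤ B ^ (d + 1) :=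
              le_trans (pow_le_pow_left₀ (norm_nonneg _) hwB i)
                (pow_le_pow_right₀ hB1 hi')
            exact mul_le_mul e1 e2 (pow_nonneg (norm_nonneg _) _) hδpos.le
        _ = K * δ := by rw [sum_const, card_range, hK]; push_cast; ring
        _ < ε'' ^ (d + 1) := by
            have : K * δ ≤ K * (ε'' ^ (d + 1) / (K + 1)) :=
              mul_le_mul_of_nonneg_left hδb (by positivity)
            have h2 : K * (ε'' ^ (d + 1) / (K + 1)) < ε'' ^ (d + 1) := by
              rw [div_eq_inv_mul, ← mul_assoc]
              have : K * (K + 1)⁻¹ < 1 := by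
                rw [mul_inv_lt_iff₀ hKpos, one_mul]; linarith
              nlinarith [pow_pos hε''pos (d + 1)]
            linarith
    -- there is a root z0 of Qp R close to w
    have hexz0 : ∃ z0 ∈ R, ‖w - z0‖ < ε'' := by
      by_contra hcon
      push_neg at hcon
      have : ε'' ^ (d + 1) ≤ ‖(Qp R).eval w‖ := by
        rw [eval_Qp, norm_list_prod, List.map_map]
        have hlen : ((R.map (fun z => ‖w - z‖)).length) = d + 1 := by simp [hR]
        have := list_prod_ge hε''pos.le (R.map fun z => ‖w - z‖) (by
          intro x hx
          obtain ⟨z, hz, rfl⟩ := List.mem_map.mp hx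
          exact hcon z hz)
        rw [hlen] at this
        exact this
      linarith
    obtain ⟨z0, hz0, hwz0⟩ := hexz0
    have hz0B : ‖z0‖ ≤ B := hRB z0 hz0
    set R'' : List ℂ := R.erase z0 with hR''def
    have hRperm : R.Perm (z0 :: R'') := List.perm_cons_erase hz0
    have hR'' : R''.length = d := by
      simp [hR''def, List.length_erase_of_mem hz0, hR]
    have hQR : Qp R = (X - C z0) * Qp R'' := by rw [Qp_perm hRperm, Qp_cons]
    have hwz0' : ‖w - z0‖ ≤ ε'' := hwz0.le
    -- synthetic-division coefficient comparison
    have hcoeff'' : ∀ i, ‖(Qp S'').coeff i - (Qp R'').coeff i‖ ≤ δ₁ := by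
      intro i
      have hS''deg : (Qp S'').natDegree ≤ d := by rw [natDegree_Qp, hS'']
      have hR''deg : (Qp R'').natDegree ≤ d := by rw [natDegree_Qp, hR'']
      have eS := coeff_of_mul_X_sub_C w (Qp S'') d hS''deg i
      have eR := coeff_of_mul_X_sub_C z0 (Qp R'') d hR''deg i
      rw [← Qp_cons] at eS
      rw [← hQR] at eR
      rw [eS, eR, ← sum_sub_distrib]
      have hterm : ∀ k ∈ range (d + 1),
          ‖w ^ k * (Qp (w :: S'')).coeff (i + 1 + k) - z0 ^ k * (Qp R).coeff (i + 1 + k)‖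
            ≤ B ^ d * δ + ((d:ℝ) + 1) * B ^ d * M * ‖w - z0‖ := by
        intro k hk
        have hk' : k ≤ d := by have := mem_range.mp hk; omega
        have hwk : ‖w ^ k‖ ≤ B ^ d := by
          rw [norm_pow]
          exact le_trans (pow_le_pow_left₀ (norm_nonneg _) hwB k) (pow_le_pow_right₀ hB1 hk')
        have hpowdiff : ‖w ^ k - z0 ^ k‖ ≤ ((d:ℝ) + 1) * B ^ d * ‖w - z0‖ := by
          rw [← geom_sum₂_mul w z0 k, norm_mul]
          have hsum : ‖∑ j ∈ range k, w ^ j * z0 ^ (k - 1 - j)‖ ≤ ((d:ℝ)+1) * B ^ d := by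
            calc ‖∑ j ∈ range k, w ^ j * z0 ^ (k - 1 - j)‖
                ≤ ∑ j ∈ range k, ‖w ^ j * z0 ^ (k - 1 - j)‖ := norm_sum_le _ _
              _ ≤ ∑ _j ∈ range k, B ^ d := by
                  refine sum_le_sum fun j hj => ?_
                  rw [norm_mul, norm_pow, norm_pow]
                  calc ‖w‖ ^ j * ‖z0‖ ^ (k - 1 - j)
                      ≤ B ^ j * B ^ (k - 1 - j) :=
                        mul_le_mul (pow_le_pow_left₀ (norm_nonneg _) hwB j)
                          (pow_le_pow_left₀ (norm_nonneg _) hz0B _)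
                          (pow_nonneg (norm_nonneg _) _) (pow_nonneg hB0 _)
                    _ = B ^ (j + (k - 1 - j)) := (pow_add B j _).symm
                    _ ≤ B ^ d := pow_le_pow_right₀ hB1 (by
                        have := mem_range.mp hj; omega)
              _ = (k : ℝ) * B ^ d := by rw [sum_const, card_range, nsmul_eq_mul]
              _ ≤ ((d:ℝ) + 1) * B ^ d := by
                  have hkd : (k:ℝ) ≤ (d:ℝ) + 1 := by exact_mod_cast hk'.trans (Nat.le_succ d)
                  nlinarith [pow_nonneg hB0 d]
          calc ‖∑ j ∈ range k, w ^ j * z0 ^ (k-1-j)‖ * ‖w - z0‖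
              ≤ (((d:ℝ)+1) * B ^ d) * ‖w - z0‖ :=
                mul_le_mul_of_nonneg_right hsum (norm_nonneg _)
            _ = ((d:ℝ)+1) * B ^ d * ‖w - z0‖ := by ring
        have key : w ^ k * (Qp (w :: S'')).coeff (i+1+k) - z0 ^ k * (Qp R).coeff (i+1+k)
            = w ^ k * ((Qp (w :: S'')).coeff (i+1+k) - (Qp R).coeff (i+1+k))
              + (w ^ k - z0 ^ k) * (Qp R).coeff (i+1+k) := by ring
        rw [key]
        calc ‖w ^ k * ((Qp (w :: S'')).coeff (i+1+k) - (Qp R).coeff (i+1+k))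
              + (w ^ k - z0 ^ k) * (Qp R).coeff (i+1+k)‖
            ≤ ‖w ^ k‖ * ‖(Qp (w :: S'')).coeff (i+1+k) - (Qp R).coeff (i+1+k)‖
              + ‖w ^ k - z0 ^ k‖ * ‖(Qp R).coeff (i+1+k)‖ := by
              refine (norm_add_le _ _).trans (le_of_eq ?_)
              rw [norm_mul, norm_mul]
          _ ≤ B ^ d * δ + (((d:ℝ)+1) * B ^ d * ‖w - z0‖) * M := by
              have h1 := mul_le_mul hwk (hclose (i+1+k)) (norm_nonneg _) (pow_nonneg hB0 d)
              have h2 := mul_le_mul hpowdiff (hMB (i+1+k)) (norm_nonneg _)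
                (by positivity)
              linarith
          _ = B ^ d * δ + ((d:ℝ)+1) * B ^ d * M * ‖w - z0‖ := by ring
      calc ‖∑ k ∈ range (d+1), (w ^ k * (Qp (w :: S'')).coeff (i+1+k)
              - z0 ^ k * (Qp R).coeff (i+1+k))‖
          ≤ ∑ k ∈ range (d+1), ‖w ^ k * (Qp (w :: S'')).coeff (i+1+k)
              - z0 ^ k * (Qp R).coeff (i+1+k)‖ := norm_sum_le _ _
        _ ≤ ∑ _k ∈ range (d+1), (B ^ d * δ + ((d:ℝ)+1) * B ^ d * M * ‖w - z0‖) :=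
            sum_le_sum hterm
        _ = ((d:ℝ)+1) * (B ^ d * δ + ((d:ℝ)+1) * B ^ d * M * ‖w - z0‖) := by
            rw [sum_const, card_range, nsmul_eq_mul]; push_cast; ring
        _ = C2 * δ + C1 * ‖w - z0‖ := by rw [hC1, hC2]; ring
        _ ≤ C2 * δ + C1 * ε'' := by
            have hC1nn : (0:ℝ) ≤ C1 := by rw [hC1]; positivity
            nlinarith
        _ ≤ δ₁ / 2 + δ₁ / 2 := by
            have hC2nn : (0:ℝ) ≤ C2 := by rw [hC2]; positivity
            have hC1nn : (0:ℝ) ≤ C1 := by rw [hC1]; positivity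
            have e1 : C2 * δ ≤ δ₁ / 2 := by
              have : C2 * δ ≤ C2 * (δ₁ / (2 * (C2 + 1))) :=
                mul_le_mul_of_nonneg_left hδa hC2nn
              have h2 : C2 * (δ₁ / (2 * (C2 + 1))) ≤ δ₁ / 2 := aux_frac hC2nn hδ₁pos.le
              linarith
            have e2 : C1 * ε'' ≤ δ₁ / 2 := by
              have hε''le : ε'' ≤ δ₁ / (2 * (C1 + 1)) := min_le_right _ _
              have : C1 * ε'' ≤ C1 * (δ₁ / (2 * (C1 + 1))) :=
                mul_le_mul_of_nonneg_left hε''le hC1nn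
              have h2 : C1 * (δ₁ / (2 * (C1 + 1))) ≤ δ₁ / 2 := aux_frac hC1nn hδ₁pos.le
              linarith
            linarith
        _ = δ₁ := by ring
    obtain ⟨R₃, S₃, hR₃, hS₃, hfa⟩ := hδ₁ z0 hz0 S'' hS'' hcoeff''
    refine ⟨z0 :: R₃, w :: S₃, ?_, ?_, ?_⟩
    · exact (hR₃.cons z0).trans hRperm.symm
    · exact hS₃.cons w
    · refine List.Forall₂.cons ?_ ?_
      · rw [norm_sub_rev]
        exact lt_of_lt_of_le hwz0 (le_trans (min_le_left _ _) (min_le_left _ _))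
      · exact hfa.imp fun {a b} h => lt_of_lt_of_le h (min_le_left _ _)







section facts
variable (m n : ℕ) (a : ℤ → ℂ) (lam : ℂ)

lemma bpoly_coeff_top (hn : 1 ≤ n) :
    (bpoly m n a lam).coeff (m + n) = a n := by
  rw [bpoly, coeff_sub, finset_sum_coeff]
  have h1 : ∀ k ∈ range (m + n + 1),
      (C (a ((k : ℤ) - m)) * X ^ k).coeff (m + n) = if k = m + n then a n else 0 := by
    intro k hk
    rw [coeff_C_mul, coeff_X_pow]
    by_cases h : m + n = k
    · rw [if_pos h, if_pos h.symm, mul_one]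
      congr 1
      omega
    · rw [if_neg h, if_neg (fun hh => h hh.symm), mul_zero]
  rw [sum_congr rfl h1, sum_ite_eq' (range (m+n+1)) (m+n)]
  rw [if_pos (mem_range.mpr (by omega))]
  have h2 : (C lam * X ^ m).coeff (m + n) = 0 := by
    rw [coeff_C_mul, coeff_X_pow, if_neg (by omega)]
    ring
  rw [h2, sub_zero]

lemma bpoly_natDegree (hn : 1 ≤ n) (han : a (n : ℤ) ≠ 0) :
    (bpoly m n a lam).natDegree = m + n := by
  refine le_antisymm ?_ (le_natDegree_of_ne_zero (by rw [bpoly_coeff_top m n a lam hn]; exact han))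
  rw [bpoly]
  refine le_trans (natDegree_sub_le _ _) (max_le ?_ ?_)
  · refine le_trans (natDegree_sum_le _ _) ?_
    rw [Finset.fold_max_le]
    refine ⟨by omega, fun k hk => ?_⟩
    exact le_trans (natDegree_C_mul_X_pow_le _ _) (by have := mem_range.mp hk; omega)
  · exact le_trans (natDegree_C_mul_X_pow_le _ _) (by omega)

lemma bpoly_factor (hn : 1 ≤ n) (han : a (n : ℤ) ≠ 0) :
    bpoly m n a lam = C (a n) * Qp (bpoly m n a lam).roots.toList ∧
      (bpoly m n a lam).roots.toList.length = m + n := by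
  have hsplit := IsAlgClosed.splits (bpoly m n a lam)
  have hlc : (bpoly m n a lam).leadingCoeff = a n := by
    rw [leadingCoeff, bpoly_natDegree m n a lam hn han, bpoly_coeff_top m n a lam hn]
  have hcard : Multiset.card (bpoly m n a lam).roots = m + n := by
    rw [splits_iff_card_roots.mp hsplit, bpoly_natDegree m n a lam hn han]
  constructor
  · have := hsplit.eq_prod_roots
    rw [hlc] at this
    nth_rewrite 1 [this]
    congr 1
    rw [Qp]
    rw [← Multiset.coe_toList (bpoly m n a lam).roots, Multiset.map_coe, Multiset.prod_coe,
      Multiset.coe_toList]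
  · rw [← Multiset.length_toList] at hcard
    exact hcard

lemma bpoly_sub (lam0 : ℂ) :
    bpoly m n a lam - bpoly m n a lam0 = C (lam0 - lam) * X ^ m := by
  rw [bpoly, bpoly]
  rw [map_sub]
  ring

-- eval identity on the circle
lemma bpoly_eval {z : ℂ} (hz : z ≠ 0) :
    (bpoly m n a lam).eval z = z ^ m * (aval m n a z - lam) := by
  rw [bpoly, eval_sub, eval_finset_sum, mul_sub]
  simp only [eval_mul, eval_C, eval_pow, eval_X]
  congr 1
  · rw [aval, Finset.mul_sum]
    refine (Finset.sum_nbij' (i := fun k => ((k : ℤ) + m).toNat) (j := fun k => (k : ℤ) - m)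
      ?_ ?_ ?_ ?_ ?_).symm
    · intro k hk
      simp only [Finset.mem_Icc] at hk
      simp only [mem_range]
      omega
    · intro k hk
      simp only [mem_range] at hk
      simp only [Finset.mem_Icc]
      omega
    · intro k hk
      simp only [Finset.mem_Icc] at hk
      omega
    · intro k hk
      simp only [mem_range] at hk
      omega
    · intro k hk
      simp only [Finset.mem_Icc] at hk
      have he : ((k + (m : ℤ)).toNat : ℤ) = k + m := by omega
      rw [← zpow_natCast z ((k + (m:ℤ)).toNat), he, zpow_add₀ hz, zpow_natCast]
      have h1 : (k : ℤ) + (m:ℤ) - (m:ℤ) = k := by ring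
      rw [h1]
      ring
  · ring
end facts

lemma countP_eq_aux (η : ℝ) (hηpos : 0 < η) : ∀ l1 l2 : List ℂ,
    List.Forall₂ (fun z w => ‖z - w‖ < η / 2) l1 l2 →
    (∀ z ∈ l1, η ≤ |‖z‖ - 1|) →
    l1.countP (fun z => decide (‖z‖ < 1))
      = l2.countP (fun z => decide (‖z‖ < 1)) := by
  intro l1 l2 h
  induction h with
  | nil => intro _; rfl
  | @cons z w l1' l2' hzw hrest ih =>
    intro hmem
    rw [List.countP_cons, List.countP_cons,
      ih (fun z hz => hmem z (List.mem_cons_of_mem _ hz))]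
    congr 1
    have hz := hmem z (List.mem_cons_self)
    have habs : |‖z‖ - ‖w‖| ≤ ‖z - w‖ := by
      simpa using abs_norm_sub_norm_le z w
    have hb : |‖z‖ - ‖w‖| < η / 2 := lt_of_le_of_lt habs hzw
    rw [abs_lt] at hb
    have hiff : ‖z‖ < 1 ↔ ‖w‖ < 1 := by
      rcases abs_cases (‖z‖ - 1) with ⟨he, hsign⟩ | ⟨he, hsign⟩ <;> rw [he] at hz <;>
        (constructor <;> intro h <;> linarith [hb.1, hb.2])
    simp [hiff]

lemma rootCount_eq_countP (m n : ℕ) (a : ℤ → ℂ) (lam : ℂ) :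
    rootCount m n a lam =
      ((bpoly m n a lam).roots.toList).countP (fun z => decide (‖z‖ < 1)) := by
  rw [rootCount, ← Multiset.coe_toList (bpoly m n a lam).roots, Multiset.filter_coe,
    Multiset.coe_card, ← List.countP_eq_length_filter, Multiset.coe_toList]

lemma locConst (m n : ℕ) (hm : 1 ≤ m) (hn : 1 ≤ n) (a : ℤ → ℂ)
    (han : a (n : ℤ) ≠ 0) :
    ∀ lam0 : ℂ, lam0 ∉ aCircle m n a → ∃ U : Set ℂ, IsOpen U ∧ lam0 ∈ U ∧
      ∀ lam ∈ U, rootCount m n a lam = rootCount m n a lam0 := by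
  intro lam0 hlam0
  obtain ⟨hfac0, hlen0⟩ := bpoly_factor m n a lam0 hn han
  set R : List ℂ := (bpoly m n a lam0).roots.toList with hRdef
  have hRcirc : ∀ z ∈ R, ‖z‖ ≠ 1 := by
    intro z hz h1
    have hzroot : (bpoly m n a lam0).eval z = 0 := by
      have : z ∈ (bpoly m n a lam0).roots := by
        rw [← Multiset.mem_toList]; exact hz
      exact isRoot_of_mem_roots this
    have hz0 : z ≠ 0 := by
      intro h; rw [h] at h1; simp at h1
    rw [bpoly_eval m n a lam0 hz0] at hzroot
    rcases mul_eq_zero.mp hzroot with h | h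
    · exact pow_ne_zero _ hz0 h
    · exact hlam0 ⟨z, h1, by linear_combination h⟩
  obtain ⟨η, hηpos, hη⟩ := exists_pos_forall_list R (fun z δ => δ ≤ |‖z‖ - 1|)
    (fun x δ δ' h1 h2 h3 => le_trans h2 h3)
    (fun z hz => ⟨|‖z‖ - 1|,
      abs_pos.mpr (sub_ne_zero.mpr (hRcirc z hz)), le_refl _⟩)
  obtain ⟨δm, hδmpos, hmatch⟩ := roots_match (m + n) R hlen0 (η / 2) (by positivity)
  have hanpos : 0 < ‖a n‖ := by
    exact norm_pos_iff.mpr han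
  refine ⟨Metric.ball lam0 (δm * ‖a n‖), Metric.isOpen_ball,
    Metric.mem_ball_self (by positivity), ?_⟩
  intro lam hlam
  obtain ⟨hfac, hlen⟩ := bpoly_factor m n a lam hn han
  set S : List ℂ := (bpoly m n a lam).roots.toList with hSdef
  have hclose : ∀ i, ‖(Qp S).coeff i - (Qp R).coeff i‖ ≤ δm := by
    intro i
    have hS1 : (bpoly m n a lam).coeff i = a n * (Qp S).coeff i := by
      rw [hfac, coeff_C_mul]
    have hR1 : (bpoly m n a lam0).coeff i = a n * (Qp R).coeff i := by
      rw [hfac0, coeff_C_mul]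
    have hkey : a n * ((Qp S).coeff i - (Qp R).coeff i) = (C (lam0 - lam) * X ^ m).coeff i := by
      rw [mul_sub, ← hS1, ← hR1, ← coeff_sub, bpoly_sub]
    have hnorm : ‖a n‖ * ‖(Qp S).coeff i - (Qp R).coeff i‖
        ≤ ‖lam0 - lam‖ := by
      have := congrArg norm hkey
      rw [norm_mul, coeff_C_mul, norm_mul] at this
      rw [this]
      have : ‖(X ^ m : Polynomial ℂ).coeff i‖ ≤ 1 := by
        rw [coeff_X_pow]
        split <;> simp
      nlinarith [norm_nonneg (lam0 - lam), norm_nonneg ((X ^ m : Polynomial ℂ).coeff i)]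
    have hd : ‖lam0 - lam‖ < δm * ‖a n‖ := by
      rw [Metric.mem_ball, dist_eq_norm] at hlam
      rw [norm_sub_rev]
      exact hlam
    nlinarith [norm_nonneg ((Qp S).coeff i - (Qp R).coeff i)]
  obtain ⟨R', S', hR', hS', hfa⟩ := hmatch S hlen hclose
  rw [rootCount_eq_countP, rootCount_eq_countP]
  have hcount : R'.countP (fun z => decide (‖z‖ < 1))
      = S'.countP (fun z => decide (‖z‖ < 1)) :=
    countP_eq_aux η hηpos R' S' hfa (fun z hz => hη z (hR'.subset hz))
  rw [← (hS'.countP_eq _), ← (hR'.countP_eq _)]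
  exact hcount.symm


end Aux

/-- the root-counting function `λ ↦ p(λ)` is locally constant on the open set
`ℂ ∖ a(𝕋)`; in particular it is constant on each connected component of `ℂ ∖ a(𝕋)`. -/
theorem stmt_16 (m n : ℕ) (hm : 1 ≤ m) (hn : 1 ≤ n) (a : ℤ → ℂ)
    (ham : a (-(m : ℤ)) ≠ 0) (han : a (n : ℤ) ≠ 0)
    (hsupp : ∀ k : ℤ, (k < -(m : ℤ) ∨ (n : ℤ) < k) → a k = 0) :
    (∀ lam0 : ℂ, lam0 ∉ aCircle m n a → ∃ U : Set ℂ, IsOpen U ∧ lam0 ∈ U ∧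
      ∀ lam ∈ U, rootCount m n a lam = rootCount m n a lam0) ∧
    (∀ lam0 : ℂ, lam0 ∉ aCircle m n a →
      ∀ lam ∈ connectedComponentIn (aCircle m n a)ᶜ lam0,
        rootCount m n a lam = rootCount m n a lam0) := by
  have h1 := locConst m n hm hn a han
  refine ⟨h1, ?_⟩
  intro lam0 hlam0 lam hlam
  by_contra hne
  set c : Set ℂ := connectedComponentIn (aCircle m n a)ᶜ lam0 with hc
  have hpre : IsPreconnected c := isPreconnected_connectedComponentIn
  have hsub : c ⊆ (aCircle m n a)ᶜ := connectedComponentIn_subset _ _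
  have hchoice : ∀ x : ℂ, x ∈ c → ∃ U : Set ℂ, IsOpen U ∧ x ∈ U ∧
      ∀ y ∈ U, rootCount m n a y = rootCount m n a x := fun x hx => h1 x (hsub hx)
  choose! U hUopen hUmem hUconst using hchoice
  set u : Set ℂ := ⋃ x ∈ {x | x ∈ c ∧ rootCount m n a x = rootCount m n a lam0}, U x with hu
  set v : Set ℂ := ⋃ x ∈ {x | x ∈ c ∧ rootCount m n a x ≠ rootCount m n a lam0}, U x with hv
  have huo : IsOpen u := isOpen_biUnion fun x hx => hUopen x hx.1
  have hvo : IsOpen v := isOpen_biUnion fun x hx => hUopen x hx.1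
  have hcover : c ⊆ u ∪ v := by
    intro x hx
    by_cases hcase : rootCount m n a x = rootCount m n a lam0
    · exact Or.inl (Set.mem_biUnion ⟨hx, hcase⟩ (hUmem x hx))
    · exact Or.inr (Set.mem_biUnion ⟨hx, hcase⟩ (hUmem x hx))
  have hlam0c : lam0 ∈ c := mem_connectedComponentIn hlam0
  have hne1 : (c ∩ u).Nonempty :=
    ⟨lam0, hlam0c, Set.mem_biUnion ⟨hlam0c, rfl⟩ (hUmem lam0 hlam0c)⟩
  have hne2 : (c ∩ v).Nonempty :=
    ⟨lam, hlam, Set.mem_biUnion ⟨hlam, hne⟩ (hUmem lam hlam)⟩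
  obtain ⟨y, _, hyu, hyv⟩ := hpre u v huo hvo hcover hne1 hne2
  obtain ⟨x1, hx1, hyx1⟩ := Set.mem_iUnion₂.mp hyu
  obtain ⟨x2, hx2, hyx2⟩ := Set.mem_iUnion₂.mp hyv
  have e1 : rootCount m n a y = rootCount m n a x1 := hUconst x1 hx1.1 y hyx1
  have e2 : rootCount m n a y = rootCount m n a x2 := hUconst x2 hx2.1 y hyx2
  exact hx2.2 (by rw [← e2, e1, hx1.2])
end
end

section
/- Holomorphy of the spectral factor: let Ω ⊆ ℂ ∖ a(𝕋) be open. For λ ∈ Ω let s_λ(z) = ∏ (z − ξ), the product running over the roots ξ of b_λ with |ξ| < 1, counted with multiplicity (a monic polynomial of degree p(λ)). Then for every integer k ≥ 0, the map λ ↦ (coefficient of z^k in s_λ) is holomorphic (complex differentiable) on Ω. -/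
open scoped ENNReal

noncomputable section

namespace Stmt17

open Polynomial Metric Real Complex MeasureTheory intervalIntegral

lemma sum_eq_aval (m n : ℕ) (a : ℤ → ℂ) {z : ℂ} (hz : z ≠ 0) :
    ∑ k ∈ Finset.range (m + n + 1), a ((k : ℤ) - (m : ℤ)) * z ^ k
      = z ^ m * aval m n a z := by
  rw [aval, Finset.mul_sum]
  refine Finset.sum_nbij' (fun j => (j : ℤ) - (m : ℤ)) (fun k => (k + (m : ℤ)).toNat) ?_ ?_ ?_ ?_ ?_
  · intro j hj
    simp only [Finset.mem_range] at hj
    simp only [Finset.mem_Icc]; omega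
  · intro k hk
    simp only [Finset.mem_Icc] at hk
    simp only [Finset.mem_range]; omega
  · intro j hj; simp only [Finset.mem_range] at hj; omega
  · intro k hk; simp only [Finset.mem_Icc] at hk; omega
  · intro j hj
    simp only [Finset.mem_range] at hj
    have : z ^ m * z ^ ((j : ℤ) - (m : ℤ)) = z ^ j := by
      rw [← zpow_natCast z m, ← zpow_add₀ hz, ← zpow_natCast z j]
      congr 1; omega
    rw [← this]; ring

lemma bpoly_eval (m n : ℕ) (a : ℤ → ℂ) (lam : ℂ) {z : ℂ} (hz : z ≠ 0) :
    (bpoly m n a lam).eval z = z ^ m * (aval m n a z - lam) := by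
  rw [bpoly]
  simp only [eval_sub, eval_finset_sum, eval_mul, eval_C, eval_pow, eval_X]
  rw [sum_eq_aval m n a hz]; ring

lemma bpoly_eval_ne_zero_on_circle (m n : ℕ) (a : ℤ → ℂ) {lam : ℂ}
    (hlam : lam ∉ aCircle m n a) {z : ℂ} (hz : ‖z‖ = 1) :
    (bpoly m n a lam).eval z ≠ 0 := by
  have hz0 : z ≠ 0 := by
    intro h; rw [h] at hz; simp at hz
  rw [bpoly_eval m n a lam hz0]
  intro h
  rcases mul_eq_zero.1 h with h1 | h2
  · exact hz0 (pow_eq_zero_iff' .. |>.1 h1).1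
  · exact hlam ⟨z, hz, sub_eq_zero.1 h2⟩

lemma bpoly_ne_zero (m n : ℕ) (a : ℤ → ℂ) (ham : a (-(m : ℤ)) ≠ 0) (hm : 1 ≤ m) (lam : ℂ) :
    bpoly m n a lam ≠ 0 := by
  intro h
  have h0 : (bpoly m n a lam).coeff 0 = a (-(m : ℤ)) := by
    rw [bpoly]
    simp only [coeff_sub, finset_sum_coeff, coeff_C_mul, coeff_X_pow]
    rw [Finset.sum_eq_single 0, if_neg (by omega : ¬ (0 = m))]
    · simp
    · intro b _ hb; simp [Ne.symm hb]
    · intro hb; simp at hb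
  rw [h] at h0
  simp only [coeff_zero] at h0
  exact ham h0.symm


lemma eval_derivative_prod_X_sub_C (t : Multiset ℂ) (z : ℂ) (h : ∀ ξ ∈ t, z ≠ ξ) :
    ((t.map fun ξ => X - C ξ).prod.derivative).eval z
      = (t.map fun ξ => X - C ξ).prod.eval z * (t.map fun ξ => (z - ξ)⁻¹).sum := by
  induction t using Multiset.induction with
  | empty => simp
  | cons ξ s ih =>
    have hξ : z - ξ ≠ 0 := sub_ne_zero.2 (h ξ (Multiset.mem_cons_self ξ s))
    have ihs := ih (fun x hx => h x (Multiset.mem_cons_of_mem hx))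
    simp only [Multiset.map_cons, Multiset.prod_cons, Multiset.sum_cons, derivative_mul,
      derivative_sub, derivative_X, derivative_C, sub_zero, one_mul, eval_add, eval_mul,
      eval_sub, eval_X, eval_C, ihs]
    field_simp

lemma logDeriv_eq_sum_roots {P : Polynomial ℂ} (hP : P ≠ 0) {z : ℂ}
    (hz : P.eval z ≠ 0) :
    P.derivative.eval z / P.eval z = ((P.roots).map fun ξ => (z - ξ)⁻¹).sum := by
  have hsplit := Polynomial.Splits.eq_prod_roots (IsAlgClosed.splits P)
  have hroot : ∀ ξ ∈ P.roots, z ≠ ξ := by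
    intro ξ hξ hzξ
    exact hz (hzξ ▸ (isRoot_of_mem_roots hξ))
  have hq : ((P.roots.map fun ξ => X - C ξ).prod).eval z ≠ 0 := by
    intro h0
    rw [hsplit] at hz
    simp [h0] at hz
  have hd := eval_derivative_prod_X_sub_C P.roots z hroot
  have hlc : P.leadingCoeff ≠ 0 := leadingCoeff_ne_zero.2 hP
  conv_lhs => rw [hsplit]
  rw [derivative_C_mul]
  simp only [eval_mul, eval_C, hd]
  field_simp

lemma circleIntegrable_pow_div_sub {j : ℕ} {ξ : ℂ} (h : ‖ξ‖ ≠ 1) :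
    CircleIntegrable (fun z => z ^ j * (z - ξ)⁻¹) 0 1 := by
  refine ContinuousOn.circleIntegrable zero_le_one ?_
  refine (continuousOn_pow j).mul (ContinuousOn.inv₀ (by fun_prop) ?_)
  intro z hz
  rw [mem_sphere_zero_iff_norm] at hz
  intro h0
  apply h
  rw [← sub_eq_zero.1 h0]
  exact hz

lemma circleIntegral_pow_div_sub (j : ℕ) {ξ : ℂ} (h : ‖ξ‖ ≠ 1) :
    (∮ z in C(0, 1), z ^ j * (z - ξ)⁻¹)
      = if ‖ξ‖ < 1 then (2 * π * I) * ξ ^ j else 0 := by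
  by_cases hlt : ‖ξ‖ < 1
  · rw [if_pos hlt]
    have : (∮ z in C(0, 1), (z - ξ)⁻¹ • (fun w : ℂ => w ^ j) z) = (2 * π * I : ℂ) • ξ ^ j := by
      refine DiffContOnCl.circleIntegral_sub_inv_smul ?_ ?_
      · exact (differentiable_pow j).diffContOnCl
      · simpa [mem_ball_zero_iff] using hlt
    simpa [smul_eq_mul, mul_comm] using this
  · rw [if_neg hlt]
    have hgt : 1 < ‖ξ‖ := lt_of_le_of_ne (not_lt.1 hlt) (Ne.symm h)
    refine circleIntegral_eq_zero_of_differentiable_on_off_countable zero_le_one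
      Set.countable_empty ?_ ?_
    · refine (continuousOn_pow j).mul (ContinuousOn.inv₀ (by fun_prop) ?_)
      intro z hz h0
      rw [mem_closedBall_zero_iff] at hz
      rw [sub_eq_zero] at h0
      rw [← h0] at hgt
      exact absurd hz (not_le.2 hgt)
    · intro z hz
      refine (differentiableAt_pow j).mul (DifferentiableAt.inv (by fun_prop) ?_)
      rw [Set.diff_empty, mem_ball_zero_iff] at hz
      intro h0
      rw [sub_eq_zero] at h0
      rw [← h0] at hgt
      exact absurd hz.le (not_le.2 hgt)

lemma my_integral_add {f g : ℂ → ℂ} {c : ℂ} {R : ℝ} (hf : CircleIntegrable f c R)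
    (hg : CircleIntegrable g c R) :
    (∮ z in C(c, R), (f z + g z)) = (∮ z in C(c, R), f z) + ∮ z in C(c, R), g z := by
  simp only [circleIntegral, smul_add, intervalIntegral.integral_add hf.out hg.out]

lemma circleIntegral_multiset_sum (s : Multiset ℂ) (f : ℂ → ℂ → ℂ)
    (hf : ∀ ξ ∈ s, CircleIntegrable (f ξ) 0 1) :
    (∮ z in C(0, 1), (s.map fun ξ => f ξ z).sum) = (s.map fun ξ => ∮ z in C(0, 1), f ξ z).sum := by
  induction s using Multiset.induction with
  | empty => simp [circleIntegral]
  | cons ξ t ih =>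
    have h1 : CircleIntegrable (f ξ) 0 1 := hf ξ (Multiset.mem_cons_self ξ t)
    have h2 : CircleIntegrable (fun z => (t.map fun x => f x z).sum) 0 1 := by
      clear ih
      induction t using Multiset.induction with
      | empty => simpa using circleIntegrable_const (0 : ℂ) 0 1
      | cons y u ihu =>
        simp only [Multiset.map_cons, Multiset.sum_cons]
        exact (hf y (by simp)).add (ihu (fun x hx => hf x (by
          rcases Multiset.mem_cons.1 hx with h | h
          · simp [h]
          · exact Multiset.mem_cons_of_mem (Multiset.mem_cons_of_mem h))))
    simp only [Multiset.map_cons, Multiset.sum_cons]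
    rw [my_integral_add h1 h2, ih (fun x hx => hf x (Multiset.mem_cons_of_mem hx))]

lemma multiset_sum_ite_filter (s : Multiset ℂ) (p : ℂ → Prop) [DecidablePred p] (g : ℂ → ℂ) :
    (s.map fun ξ => if p ξ then g ξ else 0).sum = ((s.filter p).map g).sum := by
  induction s using Multiset.induction with
  | empty => simp
  | cons ξ t ih =>
    by_cases h : p ξ <;> simp [Multiset.filter_cons_of_pos, Multiset.filter_cons_of_neg, h, ih]
lemma integral_logDeriv_eq (P : Polynomial ℂ) (hP : P ≠ 0)
    (hc : ∀ z : ℂ, ‖z‖ = 1 → P.eval z ≠ 0) (j : ℕ) :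
    (∮ z in C(0, 1), z ^ j * (P.derivative.eval z / P.eval z))
      = (2 * π * I) * (((P.roots.filter fun ξ => ‖ξ‖ < 1).map fun ξ => ξ ^ j).sum) := by
  have hne : ∀ ξ ∈ P.roots, ‖ξ‖ ≠ 1 := by
    intro ξ hξ h1
    exact hc ξ h1 ((isRoot_of_mem_roots hξ))
  have step1 : (∮ z in C(0, 1), z ^ j * (P.derivative.eval z / P.eval z))
      = ∮ z in C(0, 1), (P.roots.map fun ξ => z ^ j * (z - ξ)⁻¹).sum := by
    refine circleIntegral.integral_congr zero_le_one ?_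
    intro z hz
    rw [mem_sphere_zero_iff_norm] at hz
    have habs : ‖z‖ = 1 := by exact hz
    simp only
    rw [logDeriv_eq_sum_roots hP (hc z habs), ← Multiset.sum_map_mul_left]
  rw [step1, circleIntegral_multiset_sum _ _ (fun ξ hξ => circleIntegrable_pow_div_sub (hne ξ hξ))]
  rw [Multiset.map_congr rfl (fun ξ hξ => circleIntegral_pow_div_sub j (hne ξ hξ))]
  rw [multiset_sum_ite_filter P.roots (fun ξ => ‖ξ‖ < 1) (fun ξ => (2 * π * I) * ξ ^ j)]
  rw [← Multiset.sum_map_mul_left]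

variable (m n : ℕ) (a : ℤ → ℂ)

lemma bpoly_eq_sub (lam : ℂ) :
    bpoly m n a lam = bpoly m n a 0 - Polynomial.C lam * Polynomial.X ^ m := by
  simp [bpoly]

/-- denominator -/
def Bv (lam z : ℂ) : ℂ := Polynomial.eval z (bpoly m n a lam)
/-- numerator -/
def Nv (lam z : ℂ) : ℂ := Polynomial.eval z (bpoly m n a lam).derivative

lemma Bv_eq (lam z : ℂ) : Bv m n a lam z = Bv m n a 0 z - lam * z ^ m := by
  simp [Bv, bpoly_eq_sub m n a lam]

lemma Nv_eq (lam z : ℂ) :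
    Nv m n a lam z = Nv m n a 0 z - lam * ((m : ℂ) * z ^ (m - 1)) := by
  simp only [Nv, bpoly_eq_sub m n a lam, derivative_sub, derivative_C_mul, derivative_X_pow,
    eval_sub, eval_mul, eval_C, eval_natCast, eval_pow, eval_X]

lemma hasDerivAt_Bv (lam z : ℂ) :
    HasDerivAt (fun w => Bv m n a w z) (-(z ^ m)) lam := by
  have : HasDerivAt (fun w : ℂ => Bv m n a 0 z - w * z ^ m) (-(z ^ m)) lam := by
    simpa using ((hasDerivAt_id lam).mul_const (z ^ m)).const_sub (Bv m n a 0 z)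
  exact this.congr_of_eventuallyEq (Filter.Eventually.of_forall fun w => Bv_eq m n a w z)

lemma hasDerivAt_Nv (lam z : ℂ) :
    HasDerivAt (fun w => Nv m n a w z) (-((m : ℂ) * z ^ (m - 1))) lam := by
  have : HasDerivAt (fun w : ℂ => Nv m n a 0 z - w * ((m : ℂ) * z ^ (m - 1)))
      (-((m : ℂ) * z ^ (m - 1))) lam := by
    simpa using ((hasDerivAt_id lam).mul_const ((m : ℂ) * z ^ (m - 1))).const_sub (Nv m n a 0 z)
  exact this.congr_of_eventuallyEq (Filter.Eventually.of_forall fun w => Nv_eq m n a w z)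

lemma continuous_Bv : Continuous fun p : ℂ × ℂ => Bv m n a p.1 p.2 := by
  have : (fun p : ℂ × ℂ => Bv m n a p.1 p.2)
      = fun p : ℂ × ℂ => Bv m n a 0 p.2 - p.1 * p.2 ^ m := by
    funext p; exact Bv_eq m n a p.1 p.2
  rw [this]
  exact ((bpoly m n a 0).continuous_aeval.comp continuous_snd).sub
    (continuous_fst.mul (continuous_snd.pow m))

lemma continuous_Nv : Continuous fun p : ℂ × ℂ => Nv m n a p.1 p.2 := by
  have : (fun p : ℂ × ℂ => Nv m n a p.1 p.2)
      = fun p : ℂ × ℂ => Nv m n a 0 p.2 - p.1 * ((m : ℂ) * p.2 ^ (m - 1)) := by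
    funext p; exact Nv_eq m n a p.1 p.2
  rw [this]
  exact ((bpoly m n a 0).derivative.continuous_aeval.comp continuous_snd).sub
    (continuous_fst.mul (continuous_const.mul (continuous_snd.pow (m - 1))))

/-- the integrand of the power-sum contour integral, as a function of the parameter and
the point on the circle -/
def qfun (j : ℕ) (lam z : ℂ) : ℂ := z ^ j * (Nv m n a lam z / Bv m n a lam z)

/-- its derivative in the parameter -/
def qfun' (j : ℕ) (lam z : ℂ) : ℂ :=
  z ^ j * ((-((m : ℂ) * z ^ (m - 1)) * Bv m n a lam z - Nv m n a lam z * -z ^ m)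
    / Bv m n a lam z ^ 2)

lemma hasDerivAt_qfun (j : ℕ) (lam z : ℂ) (h : Bv m n a lam z ≠ 0) :
    HasDerivAt (fun w => qfun m n a j w z) (qfun' m n a j lam z) lam := by
  unfold qfun qfun'
  exact ((hasDerivAt_Nv m n a lam z).div (hasDerivAt_Bv m n a lam z) h).const_mul (z ^ j)

lemma norm_deriv_circleMap_one (θ : ℝ) : ‖deriv (circleMap 0 1) θ‖ = 1 := by
  rw [deriv_circleMap]
  rw [norm_mul, Complex.norm_I, mul_one, norm_circleMap_zero]
  norm_num

lemma continuous_qfun'_in_theta {j : ℕ} {x : ℂ}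
    (hB : ∀ θ : ℝ, Bv m n a x (circleMap 0 1 θ) ≠ 0) :
    Continuous fun θ : ℝ => qfun' m n a j x (circleMap 0 1 θ) := by
  unfold qfun'
  have hc := continuous_circleMap (0 : ℂ) 1
  have hBc : Continuous fun θ : ℝ => Bv m n a x (circleMap 0 1 θ) :=
    (continuous_Bv m n a).comp (continuous_const.prodMk hc)
  have hNc : Continuous fun θ : ℝ => Nv m n a x (circleMap 0 1 θ) :=
    (continuous_Nv m n a).comp (continuous_const.prodMk hc)
  exact ((hc.pow j)).mul
    ((((continuous_const.mul (hc.pow (m - 1))).neg.mul hBc).sub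
      (hNc.mul (hc.pow m).neg)).div (hBc.pow 2) (fun θ => pow_ne_zero 2 (hB θ)))

lemma continuous_qfun_in_theta {j : ℕ} {x : ℂ}
    (hB : ∀ θ : ℝ, Bv m n a x (circleMap 0 1 θ) ≠ 0) :
    Continuous fun θ : ℝ => qfun m n a j x (circleMap 0 1 θ) := by
  unfold qfun
  have hc := continuous_circleMap (0 : ℂ) 1
  have hBc : Continuous fun θ : ℝ => Bv m n a x (circleMap 0 1 θ) :=
    (continuous_Bv m n a).comp (continuous_const.prodMk hc)
  have hNc : Continuous fun θ : ℝ => Nv m n a x (circleMap 0 1 θ) :=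
    (continuous_Nv m n a).comp (continuous_const.prodMk hc)
  exact (hc.pow j).mul (hNc.div hBc hB)

lemma differentiableOn_circleIntegral_qfun {Ω : Set ℂ} (hΩopen : IsOpen Ω)
    (hne : ∀ lam ∈ Ω, ∀ z : ℂ, ‖z‖ = 1 → Bv m n a lam z ≠ 0) (j : ℕ) :
    DifferentiableOn ℂ (fun lam => ∮ z in C(0, 1), qfun m n a j lam z) Ω := by
  intro lam₀ hlam₀
  refine DifferentiableAt.differentiableWithinAt ?_
  obtain ⟨ε, εpos, hball⟩ : ∃ ε > 0, closedBall lam₀ ε ⊆ Ω :=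
    nhds_basis_closedBall.mem_iff.1 (hΩopen.mem_nhds hlam₀)
  have hmemcirc : ∀ θ : ℝ, ‖(circleMap 0 1 θ)‖ = 1 := fun θ => by
    rw [norm_circleMap_zero]; norm_num
  have hBne : ∀ x ∈ closedBall lam₀ ε, ∀ θ : ℝ, Bv m n a x (circleMap 0 1 θ) ≠ 0 :=
    fun x hx θ => hne x (hball hx) _ (hmemcirc θ)
  set g : ℂ → ℝ → ℂ :=
    fun lam θ => deriv (circleMap 0 1) θ • qfun m n a j lam (circleMap 0 1 θ) with hg
  set g' : ℂ → ℝ → ℂ :=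
    fun lam θ => deriv (circleMap 0 1) θ • qfun' m n a j lam (circleMap 0 1 θ) with hg'
  -- bound on the compact set
  set K : Set (ℂ × ℝ) := closedBall lam₀ ε ×ˢ Set.Icc (0 : ℝ) (2 * π) with hK
  have hKc : IsCompact K := (isCompact_closedBall _ _).prod isCompact_Icc
  have hcontK : ContinuousOn (fun p : ℂ × ℝ => qfun' m n a j p.1 (circleMap 0 1 p.2)) K := by
    unfold qfun'
    have hc : Continuous fun p : ℂ × ℝ => circleMap 0 1 p.2 :=
      (continuous_circleMap 0 1).comp continuous_snd
    have hBc : Continuous fun p : ℂ × ℝ => Bv m n a p.1 (circleMap 0 1 p.2) :=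
      (continuous_Bv m n a).comp (continuous_fst.prodMk hc)
    have hNc : Continuous fun p : ℂ × ℝ => Nv m n a p.1 (circleMap 0 1 p.2) :=
      (continuous_Nv m n a).comp (continuous_fst.prodMk hc)
    refine ContinuousOn.mul (hc.pow j).continuousOn ?_
    refine ContinuousOn.div ?_ (hBc.pow 2).continuousOn ?_
    · exact (((continuous_const.mul (hc.pow (m - 1))).neg.mul hBc).sub
        (hNc.mul (hc.pow m).neg)).continuousOn
    · intro p hp
      exact pow_ne_zero 2 (hBne p.1 hp.1 p.2)
  obtain ⟨M, hM⟩ := hKc.exists_bound_of_continuousOn hcontK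
  have hgcont : ∀ x ∈ closedBall lam₀ ε, Continuous (g x) := by
    intro x hx
    simp only [hg, deriv_circleMap]
    exact (((continuous_circleMap 0 1).mul continuous_const)).smul
      (continuous_qfun_in_theta m n a (hBne x hx))
  have hg'cont : Continuous (g' lam₀) := by
    simp only [hg', deriv_circleMap]
    exact (((continuous_circleMap 0 1).mul continuous_const)).smul
      (continuous_qfun'_in_theta m n a (hBne lam₀ (mem_closedBall_self εpos.le)))
  have key := intervalIntegral.hasDerivAt_integral_of_dominated_loc_of_deriv_le
    (F := g) (F' := g') (x₀ := lam₀) (a := 0) (b := 2 * π) (μ := MeasureTheory.volume)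
    (bound := fun _ => M) (ball_mem_nhds lam₀ εpos)
    ?_ ?_ ?_ ?_ ?_ ?_
  · have heq : (fun lam => ∮ z in C(0, 1), qfun m n a j lam z)
        = fun lam => ∫ θ in (0 : ℝ)..(2 * π), g lam θ := by
      funext lam; rfl
    rw [heq]
    exact key.2.differentiableAt
  · refine Filter.eventually_of_mem (closedBall_mem_nhds lam₀ εpos) (fun x hx => ?_)
    exact (hgcont x hx).aestronglyMeasurable
  · exact (hgcont lam₀ (mem_closedBall_self εpos.le)).intervalIntegrable 0 (2 * π)
  · exact hg'cont.aestronglyMeasurable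
  · refine Filter.Eventually.of_forall (fun θ hθ x hx => ?_)
    have hθ' : θ ∈ Set.Icc (0 : ℝ) (2 * π) := by
      have := Set.uIoc_of_le (by positivity : (0:ℝ) ≤ 2 * π) ▸ hθ
      exact Set.mem_Icc_of_Ioc this
    have : ‖g' x θ‖ = ‖qfun' m n a j x (circleMap 0 1 θ)‖ := by
      show ‖deriv (circleMap 0 1) θ • qfun' m n a j x (circleMap 0 1 θ)‖ = _
      rw [smul_eq_mul, norm_mul, norm_deriv_circleMap_one, one_mul]
    rw [this]
    exact hM (x, θ) ⟨ball_subset_closedBall hx, hθ'⟩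
  · exact intervalIntegrable_const
  · refine Filter.Eventually.of_forall (fun θ hθ x hx => ?_)
    exact (hasDerivAt_qfun m n a j x (circleMap 0 1 θ)
      (hBne x (ball_subset_closedBall hx) θ)).const_smul (deriv (circleMap 0 1) θ)


lemma enum_multiset (t : Multiset ℂ) :
    Multiset.map t.toList.get Finset.univ.val = t := by
  have h1 : (Finset.univ.val : Multiset (Fin t.toList.length)) = ↑(List.finRange t.toList.length) := by
    rfl
  rw [h1, Multiset.map_coe, List.map_get_finRange, Multiset.coe_toList]

lemma multiset_newton (t : Multiset ℂ) (k : ℕ) :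
    (k : ℂ) * t.esymm k = (-1) ^ (k + 1) *
      ∑ p ∈ (Finset.HasAntidiagonal.antidiagonal k).filter (fun p => p.1 < k),
        (-1) ^ p.1 * t.esymm p.1 * (t.map (fun x => x ^ p.2)).sum := by
  classical
  set l := t.toList with hl
  set f : Fin l.length → ℂ := l.get with hf
  have key := congrArg (MvPolynomial.aeval f) (MvPolynomial.mul_esymm_eq_sum (Fin l.length) ℂ k)
  have hesymm : ∀ i : ℕ, MvPolynomial.aeval f (MvPolynomial.esymm (Fin l.length) ℂ i)
      = t.esymm i := by
    intro i
    rw [MvPolynomial.aeval_esymm_eq_multiset_esymm]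
    rw [enum_multiset t]
  have hpsum : ∀ i : ℕ, MvPolynomial.aeval f (MvPolynomial.psum (Fin l.length) ℂ i)
      = (t.map (fun x => x ^ i)).sum := by
    intro i
    rw [MvPolynomial.psum]
    rw [map_sum]
    simp only [map_pow, MvPolynomial.aeval_X]
    rw [← enum_multiset t, Multiset.map_map]
    rfl
  simp only [map_mul, map_sum, map_pow, map_neg, map_one, map_natCast, hesymm, hpsum] at key
  exact key
/-- abstract recursively defined elementary symmetric functions from power sums -/
def esymmFun (F : ℕ → ℂ → ℂ) : ℕ → ℂ → ℂ
  | 0 => fun _ => 1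
  | (k + 1) => fun lam => (((k : ℂ) + 1)⁻¹ * ((-1) ^ (k + 2) *
      ∑ p ∈ ((Finset.HasAntidiagonal.antidiagonal (k + 1)).filter (fun p => p.1 < k + 1)).attach,
        (-1) ^ (p.1).1 * esymmFun F (p.1).1 lam * F (p.1).2 lam))
  decreasing_by
    have := (Finset.mem_filter.1 p.2).2
    omega

lemma esymmFun_differentiableOn (F : ℕ → ℂ → ℂ) (Ω : Set ℂ)
    (hF : ∀ j, DifferentiableOn ℂ (F j) Ω) (k : ℕ) :
    DifferentiableOn ℂ (esymmFun F k) Ω := by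
  induction k using Nat.strong_induction_on with
  | _ k ih =>
    match k with
    | 0 => simp only [esymmFun]; exact differentiableOn_const 1
    | (k + 1) =>
      simp only [esymmFun]
      refine DifferentiableOn.const_mul ?_ _
      refine DifferentiableOn.const_mul ?_ _
      refine DifferentiableOn.fun_sum (fun p _ => ?_)
      have hlt : (p.1).1 < k + 1 := (Finset.mem_filter.1 p.2).2
      exact ((ih _ hlt).const_mul _).mul (hF (p.1).2)

lemma esymmFun_eq_esymm (F : ℕ → ℂ → ℂ) (Ω : Set ℂ) (t : ℂ → Multiset ℂ)
    (hF : ∀ lam ∈ Ω, ∀ j, F j lam = ((t lam).map (fun x => x ^ j)).sum)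
    (k : ℕ) (lam : ℂ) (hlam : lam ∈ Ω) :
    esymmFun F k lam = (t lam).esymm k := by
  induction k using Nat.strong_induction_on with
  | _ k ih =>
    match k with
    | 0 => simp [esymmFun, Multiset.esymm]
    | (k + 1) =>
      have hnz : ((k : ℂ) + 1) ≠ 0 := Nat.cast_add_one_ne_zero k
      have hnewton := multiset_newton (t lam) (k + 1)
      push_cast at hnewton
      simp only [esymmFun]
      rw [Finset.sum_attach ((Finset.HasAntidiagonal.antidiagonal (k + 1)).filter (fun p => p.1 < k + 1))
        (fun p => (-1 : ℂ) ^ p.1 * esymmFun F p.1 lam * F p.2 lam)]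
      have hsum : ∑ p ∈ (Finset.HasAntidiagonal.antidiagonal (k + 1)).filter (fun p => p.1 < k + 1),
            (-1 : ℂ) ^ p.1 * esymmFun F p.1 lam * F p.2 lam
          = ∑ p ∈ (Finset.HasAntidiagonal.antidiagonal (k + 1)).filter (fun p => p.1 < k + 1),
            (-1 : ℂ) ^ p.1 * (t lam).esymm p.1 * ((t lam).map (fun x => x ^ p.2)).sum := by
        refine Finset.sum_congr rfl (fun p hp => ?_)
        rw [ih p.1 (Finset.mem_filter.1 hp).2, hF lam hlam p.2]
      rw [hsum, ← hnewton, inv_mul_cancel_left₀ hnz]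

lemma nat_eq_of_cabs_lt_one {p q : ℕ} (h : ‖((p : ℂ) - (q : ℂ))‖ < 1) : p = q := by
  have h1 : ((p : ℂ) - (q : ℂ)) = (((p : ℤ) - (q : ℤ) : ℤ) : ℂ) := by push_cast; ring
  rw [h1, Complex.norm_intCast] at h
  have h2 : |((p : ℤ) - (q : ℤ))| < 1 := by exact_mod_cast h
  rw [abs_lt] at h2
  omega

end Stmt17

/-- holomorphy of the spectral factor: on an open set `Ω ⊆ ℂ ∖ a(𝕋)`, each
coefficient of the monic factor `s_λ(z) = ∏_{|ξ|<1, b_λ(ξ)=0} (z − ξ)` (roots counted with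
multiplicity) depends holomorphically on `λ`. -/
theorem stmt_17 (m n : ℕ) (hm : 1 ≤ m) (hn : 1 ≤ n) (a : ℤ → ℂ)
    (ham : a (-(m : ℤ)) ≠ 0) (han : a (n : ℤ) ≠ 0)
    (hsupp : ∀ k : ℤ, (k < -(m : ℤ) ∨ (n : ℤ) < k) → a k = 0)
    (Ω : Set ℂ) (hΩopen : IsOpen Ω) (hΩ : Ω ⊆ (aCircle m n a)ᶜ) (k : ℕ) :
    DifferentiableOn ℂ
      (fun lam : ℂ =>
        ((((bpoly m n a lam).roots.filter fun z => ‖z‖ < 1).map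
          (fun ξ : ℂ => Polynomial.X - Polynomial.C ξ)).prod).coeff k) Ω := by
  classical
  have hPne : ∀ lam : ℂ, bpoly m n a lam ≠ 0 := Stmt17.bpoly_ne_zero m n a ham hm
  have hcirc : ∀ lam ∈ Ω, ∀ z : ℂ, ‖z‖ = 1 → (bpoly m n a lam).eval z ≠ 0 :=
    fun lam hlam z hz => Stmt17.bpoly_eval_ne_zero_on_circle m n a (hΩ hlam) hz
  set t : ℂ → Multiset ℂ :=
    fun lam => (bpoly m n a lam).roots.filter (fun z => ‖z‖ < 1) with ht
  set F : ℕ → ℂ → ℂ :=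
    fun j lam => (2 * Real.pi * Complex.I)⁻¹ * ∮ z in C(0, 1), Stmt17.qfun m n a j lam z with hF
  have hFt : ∀ lam ∈ Ω, ∀ j : ℕ, F j lam = ((t lam).map (fun x => x ^ j)).sum := by
    intro lam hlam j
    have hint := Stmt17.integral_logDeriv_eq (bpoly m n a lam) (hPne lam) (hcirc lam hlam) j
    have hq : (∮ z in C(0, 1), Stmt17.qfun m n a j lam z)
        = ∮ z in C(0, 1), z ^ j * ((bpoly m n a lam).derivative.eval z
            / (bpoly m n a lam).eval z) := rfl
    rw [hF]
    simp only
    rw [hq, hint, inv_mul_cancel_left₀ Complex.two_pi_I_ne_zero]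
  have hFdiff : ∀ j : ℕ, DifferentiableOn ℂ (F j) Ω := by
    intro j
    exact DifferentiableOn.const_mul
      (Stmt17.differentiableOn_circleIntegral_qfun m n a hΩopen
        (fun lam hlam z hz => hcirc lam hlam z hz) j) _
  have hEdiff := Stmt17.esymmFun_differentiableOn F Ω hFdiff
  intro lam₀ hlam₀
  have hcont0 : ContinuousAt (F 0) lam₀ :=
    ((hFdiff 0).differentiableAt (hΩopen.mem_nhds hlam₀)).continuousAt
  set r : ℕ := Multiset.card (t lam₀) with hr
  have h1 : ∀ᶠ lam in nhds lam₀, F 0 lam ∈ Metric.ball (F 0 lam₀) 1 :=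
    hcont0 (Metric.ball_mem_nhds _ one_pos)
  have h2 : ∀ᶠ lam in nhds lam₀, lam ∈ Ω := hΩopen.mem_nhds hlam₀
  have hcard : ∀ᶠ lam in nhds lam₀, Multiset.card (t lam) = r := by
    filter_upwards [h1, h2] with lam hb hΩ'
    have e1 : F 0 lam = (Multiset.card (t lam) : ℂ) := by
      rw [hFt lam hΩ' 0]; simp
    have e2 : F 0 lam₀ = (r : ℂ) := by
      rw [hFt lam₀ hlam₀ 0]; simp [hr]
    rw [Metric.mem_ball, Complex.dist_eq, e1, e2] at hb
    exact Stmt17.nat_eq_of_cabs_lt_one hb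
  by_cases hk : k ≤ r
  · have hev : (fun lam : ℂ => (((t lam).map
          (fun ξ : ℂ => Polynomial.X - Polynomial.C ξ)).prod).coeff k)
        =ᶠ[nhds lam₀] fun lam => (-1 : ℂ) ^ (r - k) * Stmt17.esymmFun F (r - k) lam := by
      filter_upwards [hcard, h2] with lam hc hΩ'
      rw [Multiset.prod_X_sub_C_coeff (t lam) (le_of_le_of_eq hk hc.symm), hc,
        Stmt17.esymmFun_eq_esymm F Ω t hFt (r - k) lam hΩ']
    have hg : DifferentiableAt ℂ
        (fun lam => (-1 : ℂ) ^ (r - k) * Stmt17.esymmFun F (r - k) lam) lam₀ :=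
      ((hEdiff (r - k)).differentiableAt (hΩopen.mem_nhds hlam₀)).const_mul _
    exact (hg.congr_of_eventuallyEq hev).differentiableWithinAt
  · have hev : (fun lam : ℂ => (((t lam).map
          (fun ξ : ℂ => Polynomial.X - Polynomial.C ξ)).prod).coeff k)
        =ᶠ[nhds lam₀] fun _ => (0 : ℂ) := by
      filter_upwards [hcard] with lam hc
      apply Polynomial.coeff_eq_zero_of_natDegree_lt
      rw [Polynomial.natDegree_multiset_prod_X_sub_C_eq_card, hc]
      omega
    exact ((differentiableAt_const (0 : ℂ)).congr_of_eventuallyEq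
      hev).differentiableWithinAt
end
end

section
/- Finite-section identity with rank-one correction: let (λ, v) be an eigenpair of A, i.e. v ∈ ℓ², v ≠ 0, Av = λv, and let N > max(m, n, k₁, k₂). Let v_N = (v_1, …, v_N)ᵀ ∈ ℂ^N (assume v_N ≠ 0), w_N = (v_{N+1}, …, v_{N+n})ᵀ ∈ ℂ^n, let Y be the n×n lower triangular Toeplitz matrix with entries Y_{ℓ,t} = a_{n−ℓ+t} for t ≤ ℓ and 0 otherwise (first column (a_n, a_{n−1}, …, a_1)ᵀ), and let u_N ∈ ℂ^N have its first N−n entries equal to 0 and last n entries equal to Y w_N. Let A_N be the N×N leading principal submatrix of A, with entries (A_N)_{i,j} = a_{j−i} + e_{i,j}. Then A_N v_N + u_N = λ v_N; moreover, the rank-one matrix C_N = (1/(v_N^* v_N)) u_N v_N^* satisfies (A_N + C_N) v_N = λ v_N and ‖C_N‖₂ ≤ ‖Y‖₂ ‖w_N‖₂ / ‖v_N‖₂. -/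
open scoped ENNReal

noncomputable section

/-- finite-section identity with rank-one correction: for an eigenpair
`(λ, v)` of `A = T(a) + E` and `N > max(m, n, k₁, k₂)`, with `v_N` the first `N` entries of
`v`, `w_N` the next `n` entries, `Y` the `n×n` lower triangular Toeplitz matrix with first
column `(a_n, …, a_1)ᵀ`, `u_N` the vector with first `N−n` entries `0` and last `n` entries
`Y w_N`, and `A_N` the `N×N` finite section of `A`, one has `A_N v_N + u_N = λ v_N`;
moreover `C_N = u_N v_N^⋆/(v_N^⋆ v_N)` satisfies `(A_N + C_N) v_N = λ v_N` and
`‖C_N‖₂ ≤ ‖Y‖₂ ‖w_N‖₂ / ‖v_N‖₂`. -/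
theorem stmt_18 (m n : ℕ) (hm : 1 ≤ m) (hn : 1 ≤ n) (a : ℤ → ℂ)
    (ham : a (-(m : ℤ)) ≠ 0) (han : a (n : ℤ) ≠ 0)
    (hsupp : ∀ k : ℤ, (k < -(m : ℤ) ∨ (n : ℤ) < k) → a k = 0)
    (k₁ k₂ : ℕ) (hk₁ : 1 ≤ k₁) (hk₂ : 1 ≤ k₂)
    (T E A : ell2 →L[ℂ] ell2)
    (hT : ∀ (v : ell2) (i : ℕ),
      (T v) i = ∑ j ∈ Finset.range (i + n + 1), a ((j : ℤ) - (i : ℤ)) * v j)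
    (hE : ∀ i j : ℕ, (k₁ ≤ i ∨ k₂ ≤ j) → (E (lp.single 2 j 1)) i = 0)
    (hA : A = T + E)
    (lam : ℂ) (v : ell2) (hv0 : v ≠ 0) (heig : A v = lam • v)
    (N : ℕ) (hNm : m < N) (hNn : n < N) (hNk₁ : k₁ < N) (hNk₂ : k₂ < N)
    (AN : Matrix (Fin N) (Fin N) ℂ)
    (hAN : ∀ i j : Fin N, AN i j =
      a ((j : ℤ) - (i : ℤ)) + (E (lp.single 2 (j : ℕ) 1)) (i : ℕ))
    (vN : Fin N → ℂ) (hvN : ∀ i : Fin N, vN i = v (i : ℕ)) (hvN0 : vN ≠ 0)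
    (wN : Fin n → ℂ) (hwN : ∀ t : Fin n, wN t = v (N + (t : ℕ)))
    (Y : Matrix (Fin n) (Fin n) ℂ)
    (hY : ∀ l t : Fin n, Y l t =
      if (t : ℕ) ≤ (l : ℕ) then a ((n : ℤ) - (l : ℕ) + (t : ℕ)) else 0)
    (uN : Fin N → ℂ)
    (huN : ∀ i : Fin N, uN i =
      ∑ t : Fin n, if (i : ℕ) = N - n + (t : ℕ) then Y.mulVec wN t else 0)
    (CN : Matrix (Fin N) (Fin N) ℂ)
    (hCN : ∀ i j : Fin N, CN i j =
      uN i * (starRingEnd ℂ) (vN j) / (∑ l : Fin N, (starRingEnd ℂ) (vN l) * vN l)) :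
    AN.mulVec vN + uN = lam • vN ∧
    (AN + CN).mulVec vN = lam • vN ∧
    ‖Matrix.toEuclideanCLM (𝕜 := ℂ) CN‖ ≤
      ‖Matrix.toEuclideanCLM (𝕜 := ℂ) Y‖ * ‖(WithLp.equiv 2 (Fin n → ℂ)).symm wN‖ /
        ‖(WithLp.equiv 2 (Fin N → ℂ)).symm vN‖ := by
  
  classical
  -- Eigenvector coordinate identity
  have hcoord : ∀ i : ℕ, (T v : ℕ → ℂ) i + (E v : ℕ → ℂ) i = lam * (v : ℕ → ℂ) i := by
    intro i
    have h := congrArg (fun f : ell2 => (f : ℕ → ℂ) i) heig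
    simp only [hA, ContinuousLinearMap.add_apply, lp.coeFn_add, Pi.add_apply,
      lp.coeFn_smul, Pi.smul_apply, smul_eq_mul] at h
    exact h
  -- E applied to high single basis vectors is zero
  have hEsingle : ∀ j : ℕ, k₂ ≤ j → E (lp.single 2 j ((v : ℕ → ℂ) j)) = 0 := by
    intro j hj
    have h1 : E (lp.single 2 j (1 : ℂ)) = 0 := by
      apply lp.ext
      funext i
      simpa using hE i j (Or.inr hj)
    have h2 : lp.single (E := fun _ : ℕ => ℂ) 2 j ((v : ℕ → ℂ) j)
        = (v : ℕ → ℂ) j • lp.single (E := fun _ : ℕ => ℂ) 2 j (1 : ℂ) := by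
      have := lp.single_smul (E := fun _ : ℕ => ℂ) 2 j ((v : ℕ → ℂ) j) (1 : ℂ)
      rw [← this, smul_eq_mul, mul_one]
    rw [h2, map_smul, h1, smul_zero]
  -- coordinates of E v
  have hEv : ∀ i : ℕ, (E v : ℕ → ℂ) i =
      ∑ j ∈ Finset.range k₂, (E (lp.single 2 j (1 : ℂ)) : ℕ → ℂ) i * (v : ℕ → ℂ) j := by
    intro i
    have hsum : HasSum (fun j : ℕ => E (lp.single 2 j ((v : ℕ → ℂ) j))) (E v) :=
      E.hasSum (lp.hasSum_single (by norm_num) v)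
    have hfin : HasSum (fun j : ℕ => E (lp.single 2 j ((v : ℕ → ℂ) j)))
        (∑ j ∈ Finset.range k₂, E (lp.single 2 j ((v : ℕ → ℂ) j))) :=
      hasSum_sum_of_ne_finset_zero (fun j hj => hEsingle j (by simpa using hj))
    have hEeq := hsum.unique hfin
    rw [hEeq]
    rw [show ((∑ j ∈ Finset.range k₂, E (lp.single 2 j ((v : ℕ → ℂ) j)) : ell2) : ℕ → ℂ) i
        = ∑ j ∈ Finset.range k₂, (E (lp.single 2 j ((v : ℕ → ℂ) j)) : ℕ → ℂ) i by
      rw [lp.coeFn_sum]; exact Finset.sum_apply _ _ _]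
    refine Finset.sum_congr rfl fun j _ => ?_
    have h2 : lp.single (E := fun _ : ℕ => ℂ) 2 j ((v : ℕ → ℂ) j)
        = (v : ℕ → ℂ) j • lp.single (E := fun _ : ℕ => ℂ) 2 j (1 : ℂ) := by
      have := lp.single_smul (E := fun _ : ℕ => ℂ) 2 j ((v : ℕ → ℂ) j) (1 : ℂ)
      rw [← this, smul_eq_mul, mul_one]
    rw [h2, map_smul, lp.coeFn_smul, Pi.smul_apply, smul_eq_mul]
    ring
  -- key pointwise identity
  have key : ∀ i : Fin N, AN.mulVec vN i + uN i = lam * vN i := by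
    intro i
    have hi : (i : ℕ) < N := i.isLt
    have hmv : AN.mulVec vN i =
        (∑ j ∈ Finset.range N, a ((j : ℤ) - ((i : ℕ) : ℤ)) * (v : ℕ → ℂ) j)
        + ∑ j ∈ Finset.range N, (E (lp.single 2 j (1 : ℂ)) : ℕ → ℂ) (i : ℕ) * (v : ℕ → ℂ) j := by
      rw [Matrix.mulVec, dotProduct, ← Finset.sum_add_distrib,
        ← Fin.sum_univ_eq_sum_range (fun j =>
          a ((j : ℤ) - ((i : ℕ) : ℤ)) * (v : ℕ → ℂ) j
          + (E (lp.single 2 j (1 : ℂ)) : ℕ → ℂ) (i : ℕ) * (v : ℕ → ℂ) j) N]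
      refine Finset.sum_congr rfl fun j _ => ?_
      rw [hAN i j, hvN j]
      ring
    -- E part
    have hEpart : ∑ j ∈ Finset.range N, (E (lp.single 2 j (1 : ℂ)) : ℕ → ℂ) (i : ℕ) * (v : ℕ → ℂ) j
        = (E v : ℕ → ℂ) (i : ℕ) := by
      rw [hEv (i : ℕ)]
      symm
      apply Finset.sum_subset (Finset.range_subset_range.2 hNk₂.le)
      intro j _ hj
      rw [hE (i : ℕ) j (Or.inr (by simpa using hj))]
      ring
    -- T part
    have hTtail : uN i = ∑ t ∈ Finset.range n, a (((N + t : ℕ) : ℤ) - ((i : ℕ) : ℤ)) * (v : ℕ → ℂ) (N + t) := by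
      rw [huN i, ← Fin.sum_univ_eq_sum_range (fun t =>
        a (((N + t : ℕ) : ℤ) - ((i : ℕ) : ℤ)) * (v : ℕ → ℂ) (N + t)) n]
      have hnN : n ≤ N := hNn.le
      rcases lt_or_ge (i : ℕ) (N - n) with hlt | hge
      · trans (0 : ℂ)
        · apply Finset.sum_eq_zero
          intro t _
          rw [if_neg (by omega)]
        · symm
          apply Finset.sum_eq_zero
          intro t _
          rw [hsupp _ (Or.inr (by push_cast; omega))]
          ring
      · set s : ℕ := (i : ℕ) - (N - n) with hs_def
        have hs : s < n := by omega
        have hieq : (i : ℕ) = N - n + s := by omega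
        rw [Finset.sum_eq_single_of_mem (⟨s, hs⟩ : Fin n) (Finset.mem_univ _)]
        · rw [if_pos (by simp only [Fin.val_mk]; omega)]
          rw [Matrix.mulVec, dotProduct]
          refine Finset.sum_congr rfl fun r _ => ?_
          rw [hY, hwN]
          by_cases hr : (r : ℕ) ≤ s
          · rw [if_pos hr]
            congr 2
            push_cast [hieq, Nat.cast_sub hNn.le]
            ring
          · rw [if_neg hr, hsupp _ (Or.inr (by push_cast [hieq, Nat.cast_sub hNn.le]; omega))]
        · intro t _ ht
          rw [if_neg]
          intro hcontra
          apply ht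
          apply Fin.ext
          simp only [Fin.val_mk]
          omega
    have hTpart : (∑ j ∈ Finset.range N, a ((j : ℤ) - ((i : ℕ) : ℤ)) * (v : ℕ → ℂ) j) + uN i
        = (T v : ℕ → ℂ) (i : ℕ) := by
      rw [hT v (i : ℕ)]
      have hext : ∑ j ∈ Finset.range ((i : ℕ) + n + 1), a ((j : ℤ) - ((i : ℕ) : ℤ)) * (v : ℕ → ℂ) j
          = ∑ j ∈ Finset.range (N + n), a ((j : ℤ) - ((i : ℕ) : ℤ)) * (v : ℕ → ℂ) j := by
        apply Finset.sum_subset (Finset.range_subset_range.2 (by omega))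
        intro j _ hj
        simp only [Finset.mem_range, not_lt] at hj
        rw [hsupp _ (Or.inr (by push_cast; omega))]
        ring
      rw [hext]
      have hsplit : ∑ j ∈ Finset.range (N + n), a ((j : ℤ) - ((i : ℕ) : ℤ)) * (v : ℕ → ℂ) j
          = (∑ j ∈ Finset.range N, a ((j : ℤ) - ((i : ℕ) : ℤ)) * (v : ℕ → ℂ) j)
            + ∑ j ∈ Finset.Ico N (N + n), a ((j : ℤ) - ((i : ℕ) : ℤ)) * (v : ℕ → ℂ) j := by
        rw [Finset.range_eq_Ico, Finset.range_eq_Ico]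
        exact (Finset.sum_Ico_consecutive _ (Nat.zero_le N) (by omega : N ≤ N + n)).symm
      rw [hsplit, hTtail]
      congr 1
      rw [Finset.sum_Ico_eq_sum_range]
      simp
    rw [hmv, hEpart, hvN i, ← hcoord (i : ℕ), ← hTpart]
    ring
  -- Part 1
  have h1 : AN.mulVec vN + uN = lam • vN := by
    funext i
    simpa [smul_eq_mul] using key i
  -- the scalar S
  set S : ℂ := ∑ l : Fin N, (starRingEnd ℂ) (vN l) * vN l with hS
  set vNe : EuclideanSpace ℂ (Fin N) := (WithLp.equiv 2 (Fin N → ℂ)).symm vN with hvNe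
  set wNe : EuclideanSpace ℂ (Fin n) := (WithLp.equiv 2 (Fin n → ℂ)).symm wN with hwNe
  set uNe : EuclideanSpace ℂ (Fin N) := (WithLp.equiv 2 (Fin N → ℂ)).symm uN with huNe
  have hvNe0 : vNe ≠ 0 := by
    intro h
    apply hvN0
    funext i
    have := congrFun (congrArg (fun x : EuclideanSpace ℂ (Fin N) => (WithLp.equiv 2 (Fin N → ℂ)) x) h) i
    simpa [hvNe] using this
  have hvNe_pos : 0 < ‖vNe‖ := norm_pos_iff.2 hvNe0
  have hSinner : S = (inner ℂ vNe vNe : ℂ) := by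
    rw [PiLp.inner_apply]
    refine Finset.sum_congr rfl fun l _ => ?_
    rw [RCLike.inner_apply']
    simp [hvNe]
  have hSnorm : S = ((‖vNe‖ : ℂ)) ^ 2 := by
    rw [hSinner, inner_self_eq_norm_sq_to_K]
    norm_num
  have hSne : S ≠ 0 := by
    rw [hSnorm]
    exact pow_ne_zero 2 (by exact_mod_cast hvNe_pos.ne')
  -- C_N v_N = u_N
  have hCv : CN.mulVec vN = uN := by
    funext i
    rw [Matrix.mulVec, dotProduct]
    calc ∑ j : Fin N, CN i j * vN j
        = (uN i / S) * ∑ j : Fin N, (starRingEnd ℂ) (vN j) * vN j := by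
          rw [Finset.mul_sum]
          refine Finset.sum_congr rfl fun j _ => ?_
          rw [hCN i j]
          ring
      _ = uN i := by rw [← hS, div_mul_cancel₀ _ hSne]
  have h2 : (AN + CN).mulVec vN = lam • vN := by
    funext i
    rw [Matrix.add_mulVec, Pi.add_apply, hCv]
    exact congrFun h1 i
  refine ⟨h1, h2, ?_⟩
  -- norm of uNe
  have hg : ∀ t : Fin n, (⟨N - n + (t : ℕ), by omega⟩ : Fin N) = (⟨N - n + (t : ℕ), by omega⟩ : Fin N) := fun _ => rfl
  have huval : ∀ t : Fin n, uN ⟨N - n + (t : ℕ), by omega⟩ = Y.mulVec wN t := by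
    intro t
    rw [huN]
    rw [Finset.sum_eq_single_of_mem t (Finset.mem_univ _)]
    · rw [if_pos rfl]
    · intro r _ hr
      rw [if_neg]
      intro hcontra
      apply hr
      apply Fin.ext
      simp only [Fin.val_mk] at hcontra
      omega
  have huzero : ∀ i : Fin N, (i : ℕ) < N - n → uN i = 0 := by
    intro i hi
    rw [huN]
    apply Finset.sum_eq_zero
    intro t _
    rw [if_neg (by omega)]
  have hu_norm_eq : ‖uNe‖ = ‖(WithLp.equiv 2 (Fin n → ℂ)).symm (Y.mulVec wN)‖ := by
    rw [EuclideanSpace.norm_eq, EuclideanSpace.norm_eq]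
    congr 1
    have himg : ∑ i : Fin N, ‖uNe i‖ ^ 2
        = ∑ i ∈ Finset.univ.image (fun t : Fin n => (⟨N - n + (t : ℕ), by omega⟩ : Fin N)),
            ‖uNe i‖ ^ 2 := by
      symm
      apply Finset.sum_subset (Finset.subset_univ _)
      intro i _ hi
      have hilt : (i : ℕ) < N - n := by
        by_contra hge
        push_neg at hge
        apply hi
        refine Finset.mem_image.2 ⟨⟨(i : ℕ) - (N - n), by omega⟩, Finset.mem_univ _, ?_⟩
        apply Fin.ext
        simp only [Fin.val_mk]
        omega
      have : uNe i = 0 := by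
        rw [huNe, WithLp.equiv_symm_apply, PiLp.toLp_apply]
        exact huzero i hilt
      rw [this]
      simp
    rw [himg, Finset.sum_image (by
      intro t _ r _ htr
      apply Fin.ext
      have := congrArg Fin.val htr
      simp only [Fin.val_mk] at this
      omega)]
    refine Finset.sum_congr rfl fun t _ => ?_
    rw [huNe, WithLp.equiv_symm_apply, PiLp.toLp_apply, huval t, WithLp.equiv_symm_apply, PiLp.toLp_apply]
  have hu_le : ‖uNe‖ ≤ ‖Matrix.toEuclideanCLM (𝕜 := ℂ) Y‖ * ‖wNe‖ := by
    rw [hu_norm_eq]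
    have happ : (Matrix.toEuclideanCLM (𝕜 := ℂ) Y) wNe
        = (WithLp.equiv 2 (Fin n → ℂ)).symm (Y.mulVec wN) := by
      rw [show ((Matrix.toEuclideanCLM (𝕜 := ℂ) Y) wNe)
          = (WithLp.equiv 2 (Fin n → ℂ)).symm (Y.mulVec ((WithLp.equiv 2 (Fin n → ℂ)) wNe)) from rfl]
      rw [hwNe]
      simp
    rw [← happ]
    exact (Matrix.toEuclideanCLM (𝕜 := ℂ) Y).le_opNorm wNe
  -- final operator norm bound
  apply ContinuousLinearMap.opNorm_le_bound _
    (div_nonneg (mul_nonneg (norm_nonneg _) (norm_nonneg _)) (norm_nonneg _))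
  intro x
  set t : ℂ := (inner ℂ vNe x : ℂ) with ht
  have happC : (Matrix.toEuclideanCLM (𝕜 := ℂ) CN) x = (t / S) • uNe := by
    rw [show ((Matrix.toEuclideanCLM (𝕜 := ℂ) CN) x)
        = (WithLp.equiv 2 (Fin N → ℂ)).symm (CN.mulVec ((WithLp.equiv 2 (Fin N → ℂ)) x)) from rfl]
    rw [show (t / S) • uNe = (WithLp.equiv 2 (Fin N → ℂ)).symm ((t / S) • uN) by
      rw [huNe, WithLp.equiv_symm_apply, WithLp.toLp_smul]]
    congr 1
    funext i
    rw [Matrix.mulVec, dotProduct, Pi.smul_apply, smul_eq_mul]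
    calc ∑ j : Fin N, CN i j * (WithLp.equiv 2 (Fin N → ℂ)) x j
        = (uN i / S) * ∑ j : Fin N, (starRingEnd ℂ) (vN j) * x j := by
          rw [Finset.mul_sum]
          refine Finset.sum_congr rfl fun j _ => ?_
          rw [hCN i j]
          simp only [WithLp.equiv_apply]
          ring
      _ = t / S * uN i := by
          rw [ht, PiLp.inner_apply]
          have : ∑ j : Fin N, (inner ℂ (vNe j) (x j) : ℂ) = ∑ j : Fin N, (starRingEnd ℂ) (vN j) * x j := by
            refine Finset.sum_congr rfl fun j _ => ?_
            rw [RCLike.inner_apply', hvNe]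
            simp
          rw [this]
          ring
  rw [happC, norm_smul]
  have htle : ‖t‖ ≤ ‖vNe‖ * ‖x‖ := norm_inner_le_norm (𝕜 := ℂ) vNe x
  have hSval : ‖(t / S : ℂ)‖ = ‖t‖ / ‖vNe‖ ^ 2 := by
    rw [norm_div, hSnorm]
    congr 1
    rw [norm_pow, Complex.norm_real]
    simp [abs_of_nonneg hvNe_pos.le]
  rw [hSval]
  calc ‖t‖ / ‖vNe‖ ^ 2 * ‖uNe‖
      ≤ (‖vNe‖ * ‖x‖) / ‖vNe‖ ^ 2 * (‖Matrix.toEuclideanCLM (𝕜 := ℂ) Y‖ * ‖wNe‖) := by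
        apply mul_le_mul _ hu_le (norm_nonneg _)
          (div_nonneg (mul_nonneg (norm_nonneg _) (norm_nonneg _)) (pow_nonneg (norm_nonneg _) 2))
        exact (div_le_div_iff_of_pos_right (pow_pos hvNe_pos 2)).2 htle
    _ = ‖Matrix.toEuclideanCLM (𝕜 := ℂ) Y‖ * ‖wNe‖ / ‖vNe‖ * ‖x‖ := by
        rw [show (‖vNe‖ * ‖x‖) / ‖vNe‖ ^ 2 = ‖x‖ / ‖vNe‖ by
          rw [pow_two, mul_div_mul_left _ _ hvNe_pos.ne']]
        ring
end
end

section
/- Hermitian finite-section approximation: in addition to the setting of the finite-section identity, assume the N×N matrix A_N is Hermitian (A_N^* = A_N). Let (λ, v) be an eigenpair of A with v ∈ ℓ², v ≠ 0, N > max(m, n, k₁, k₂), v_N = (v_1, …, v_N)ᵀ ≠ 0, w_N = (v_{N+1}, …, v_{N+n})ᵀ, and Y the n×n lower triangular Toeplitz matrix with entries Y_{ℓ,t} = a_{n−ℓ+t} for t ≤ ℓ and 0 otherwise. Then there exists an eigenvalue μ of A_N such that |λ − μ| ≤ ‖Y‖₂ ‖w_N‖₂ / ‖v_N‖₂. -/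
open scoped ENNReal

noncomputable section

/-- Residual bound for Hermitian matrices: the distance from `lam` to the spectrum is
bounded by the relative residual. -/
lemma herm_residual {N : ℕ} (AN : Matrix (Fin N) (Fin N) ℂ) (hherm : AN.IsHermitian)
    (lam : ℂ) (x : EuclideanSpace ℂ (Fin N)) (hx : x ≠ 0) :
    ∃ μ ∈ spectrum ℂ AN,
      ‖lam - μ‖ * ‖x‖ ≤ ‖Matrix.toEuclideanCLM (𝕜 := ℂ) AN x - lam • x‖ := by
  have hN : N ≠ 0 := by
    rintro rfl
    exact hx (Subsingleton.elim _ _)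
  haveI : NeZero N := ⟨hN⟩
  set b := hherm.eigenvectorBasis with hb
  set d := hherm.eigenvalues with hd
  set M := Matrix.toEuclideanCLM (𝕜 := ℂ) AN with hM
  have hMb : ∀ i, M (b i) = (d i : ℂ) • b i := by
    intro i
    have h1 := hherm.mulVec_eigenvectorBasis i
    apply (WithLp.equiv 2 (Fin N → ℂ)).injective
    funext j
    have h2 := congrFun h1 j
    simpa [M, Matrix.ofLp_toEuclideanCLM, Matrix.toLin'_apply,
      Complex.real_smul] using h2
  have hself : ContinuousLinearMap.adjoint M = M := by
    rw [← ContinuousLinearMap.star_eq_adjoint, hM, ← map_star]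
    exact congrArg _ hherm
  have hinner : ∀ (i : Fin N) (y : EuclideanSpace ℂ (Fin N)),
      b.repr (M y) i = (d i : ℂ) * b.repr y i := by
    intro i y
    rw [b.repr_apply_apply, b.repr_apply_apply]
    calc inner ℂ (b i) (M y) = inner ℂ (ContinuousLinearMap.adjoint M (b i)) y :=
          (ContinuousLinearMap.adjoint_inner_left M y (b i)).symm
      _ = inner ℂ (M (b i)) y := by rw [hself]
      _ = (inner ℂ ((d i : ℂ) • b i) y : ℂ) := by rw [hMb]
      _ = (d i : ℂ) * inner ℂ (b i) y := by
          rw [inner_smul_left]; simp [Complex.conj_ofReal]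
  obtain ⟨i₀, -, hmin⟩ := Finset.exists_min_image Finset.univ
    (fun i => ‖lam - (d i : ℂ)‖) ⟨Classical.arbitrary _, Finset.mem_univ _⟩
  refine ⟨(d i₀ : ℂ), ?_, ?_⟩
  · have h := hherm.eigenvalues_mem_spectrum_real i₀
    simpa using spectrum.algebraMap_mem ℂ h
  · set u := M x - lam • x with hu
    have hrepr : ∀ i, b.repr u i = ((d i : ℂ) - lam) * b.repr x i := by
      intro i
      rw [hu, map_sub, map_smul]
      have : (b.repr (M x) - lam • b.repr x) i = b.repr (M x) i - lam * b.repr x i := rfl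
      rw [this, hinner]
      ring
    have hxnorm : ‖x‖ = Real.sqrt (∑ i, ‖b.repr x i‖ ^ 2) := by
      rw [← b.repr.norm_map x, EuclideanSpace.norm_eq]
    have hunorm : ‖u‖ = Real.sqrt (∑ i, ‖b.repr u i‖ ^ 2) := by
      rw [← b.repr.norm_map u, EuclideanSpace.norm_eq]
    have key : ∀ i, ‖lam - (d i₀ : ℂ)‖ ^ 2 * ‖b.repr x i‖ ^ 2
        ≤ ‖b.repr u i‖ ^ 2 := by
      intro i
      have h1 : ‖lam - (d i₀ : ℂ)‖ ≤ ‖lam - (d i : ℂ)‖ :=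
        hmin i (Finset.mem_univ i)
      have h2 : ‖b.repr u i‖ = ‖lam - (d i : ℂ)‖ * ‖b.repr x i‖ := by
        rw [hrepr i, norm_mul, norm_sub_rev]
      rw [h2, mul_pow]
      have := mul_le_mul_of_nonneg_right
        (pow_le_pow_left₀ (norm_nonneg _) h1 2)
        (pow_nonneg (norm_nonneg (b.repr x i)) 2)
      simpa using this
    calc ‖lam - (d i₀ : ℂ)‖ * ‖x‖
        = Real.sqrt (‖lam - (d i₀ : ℂ)‖ ^ 2 * ∑ i, ‖b.repr x i‖ ^ 2) := by
          rw [Real.sqrt_mul (sq_nonneg _), Real.sqrt_sq (norm_nonneg _), hxnorm]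
      _ = Real.sqrt (∑ i, ‖lam - (d i₀ : ℂ)‖ ^ 2 * ‖b.repr x i‖ ^ 2) := by
          rw [Finset.mul_sum]
      _ ≤ Real.sqrt (∑ i, ‖b.repr u i‖ ^ 2) :=
          Real.sqrt_le_sqrt (Finset.sum_le_sum fun i _ => key i)
      _ = ‖u‖ := hunorm.symm

/-- Hermitian finite-section approximation: in the setting of the
finite-section identity, if additionally the finite section `A_N` is Hermitian, then some
eigenvalue `μ` of `A_N` satisfies `|λ − μ| ≤ ‖Y‖₂ ‖w_N‖₂ / ‖v_N‖₂`. -/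
theorem stmt_19 (m n : ℕ) (hm : 1 ≤ m) (hn : 1 ≤ n) (a : ℤ → ℂ)
    (ham : a (-(m : ℤ)) ≠ 0) (han : a (n : ℤ) ≠ 0)
    (hsupp : ∀ k : ℤ, (k < -(m : ℤ) ∨ (n : ℤ) < k) → a k = 0)
    (k₁ k₂ : ℕ) (hk₁ : 1 ≤ k₁) (hk₂ : 1 ≤ k₂)
    (T E A : ell2 →L[ℂ] ell2)
    (hT : ∀ (v : ell2) (i : ℕ),
      (T v) i = ∑ j ∈ Finset.range (i + n + 1), a ((j : ℤ) - (i : ℤ)) * v j)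
    (hE : ∀ i j : ℕ, (k₁ ≤ i ∨ k₂ ≤ j) → (E (lp.single 2 j 1)) i = 0)
    (hA : A = T + E)
    (lam : ℂ) (v : ell2) (hv0 : v ≠ 0) (heig : A v = lam • v)
    (N : ℕ) (hNm : m < N) (hNn : n < N) (hNk₁ : k₁ < N) (hNk₂ : k₂ < N)
    (AN : Matrix (Fin N) (Fin N) ℂ)
    (hAN : ∀ i j : Fin N, AN i j =
      a ((j : ℤ) - (i : ℤ)) + (E (lp.single 2 (j : ℕ) 1)) (i : ℕ))
    (hherm : AN.IsHermitian)
    (vN : Fin N → ℂ) (hvN : ∀ i : Fin N, vN i = v (i : ℕ)) (hvN0 : vN ≠ 0)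
    (wN : Fin n → ℂ) (hwN : ∀ t : Fin n, wN t = v (N + (t : ℕ)))
    (Y : Matrix (Fin n) (Fin n) ℂ)
    (hY : ∀ l t : Fin n, Y l t =
      if (t : ℕ) ≤ (l : ℕ) then a ((n : ℤ) - (l : ℕ) + (t : ℕ)) else 0) :
    ∃ μ ∈ spectrum ℂ AN,
      ‖lam - μ‖ ≤
        ‖Matrix.toEuclideanCLM (𝕜 := ℂ) Y‖ * ‖(WithLp.equiv 2 (Fin n → ℂ)).symm wN‖ /
          ‖(WithLp.equiv 2 (Fin N → ℂ)).symm vN‖ := by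
  classical
  -- the columns of `E` with index `≥ k₂` vanish
  have hEzero : ∀ j : ℕ, k₂ ≤ j → E (lp.single 2 j 1) = 0 := by
    intro j hj
    apply lp.ext
    funext i
    simpa using hE i j (Or.inr hj)
  -- `E v` only depends on the first `k₂` coordinates of `v`
  have hEv_sum : E v = ∑ j ∈ Finset.range k₂, v j • E (lp.single 2 j 1) := by
    have h1 : HasSum (fun j : ℕ => lp.single 2 j (v j)) v :=
      lp.hasSum_single (by norm_num) v
    have h2 : HasSum (fun j : ℕ => E (lp.single 2 j (v j))) (E v) :=
      E.hasSum h1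
    have h3 : ∀ j : ℕ, E (lp.single 2 j (v j)) = v j • E (lp.single 2 j 1) := by
      intro j
      have : (lp.single 2 j (v j) : ell2) = v j • lp.single 2 j (1 : ℂ) := by
        rw [← lp.single_smul (E := fun _ : ℕ => ℂ) 2 j (v j) (1 : ℂ), smul_eq_mul, mul_one]
      rw [this, map_smul]
    have h4 : HasSum (fun j : ℕ => v j • E (lp.single 2 j 1)) (E v) := by
      simpa only [h3] using h2
    refine h4.unique (hasSum_sum_of_ne_finset_zero ?_)
    intro j hj
    rw [hEzero j (by simpa using hj), smul_zero]
  have hEv : ∀ i : ℕ, (E v) i = ∑ j ∈ Finset.range k₂, (E (lp.single 2 j 1)) i * v j := by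
    intro i
    rw [hEv_sum, lp.coeFn_sum]
    simp only [Finset.sum_apply]
    refine Finset.sum_congr rfl fun j _ => ?_
    rw [lp.coeFn_smul]
    simp [mul_comm]
  -- the eigenvalue equation coordinatewise
  have heigc : ∀ i : ℕ, lam * v i = (T v) i + (E v) i := by
    intro i
    calc lam * v i = (lam • v) i := by rw [lp.coeFn_smul]; rfl
      _ = (A v) i := by rw [heig]
      _ = ((T + E) v) i := by rw [hA]
      _ = (T v + E v) i := rfl
      _ = (T v) i + (E v) i := by rw [lp.coeFn_add]; rfl
  -- the residual vector
  set r : Fin N → ℂ := fun i => AN.mulVec vN i - lam * vN i with hrdef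
  have hr : ∀ i : Fin N,
      r i = -(∑ t ∈ Finset.range n, a ((N : ℤ) + t - (i : ℕ)) * v (N + t)) := by
    intro i
    have hiN : (i : ℕ) < N := i.isLt
    -- the matrix-vector product
    have hAv : AN.mulVec vN i = (∑ j ∈ Finset.range N, a ((j : ℤ) - (i : ℕ)) * v j)
        + ∑ j ∈ Finset.range N, (E (lp.single 2 j 1)) (i : ℕ) * v j := by
      rw [Matrix.mulVec, dotProduct, ← Finset.sum_add_distrib]
      rw [← Fin.sum_univ_eq_sum_range
        (fun j => a ((j : ℤ) - (i : ℕ)) * v j + (E (lp.single 2 j 1)) (i : ℕ) * v j) N]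
      refine Finset.sum_congr rfl fun j _ => ?_
      rw [hAN i j, hvN j, add_mul]
    -- reduce the `E`-sum to `E v`
    have hEsum : ∑ j ∈ Finset.range N, (E (lp.single 2 j 1)) (i : ℕ) * v j
        = (E v) (i : ℕ) := by
      rw [hEv]
      refine (Finset.sum_subset (Finset.range_subset_range.mpr hNk₂.le) fun j _ hj => ?_).symm
      rw [hE _ j (Or.inr (by simpa using hj)), zero_mul]
    -- extend the `T`-sum to `range (N + n)`
    have hT2 : (T v) (i : ℕ) = ∑ j ∈ Finset.range (N + n), a ((j : ℤ) - (i : ℕ)) * v j := by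
      rw [hT]
      refine Finset.sum_subset (Finset.range_subset_range.mpr (by omega)) fun j _ hj => ?_
      have hj' : (i : ℕ) + n + 1 ≤ j := by simpa using hj
      rw [hsupp _ (Or.inr (by push_cast; omega)), zero_mul]
    have hsplit : ∑ j ∈ Finset.range (N + n), a ((j : ℤ) - (i : ℕ)) * v j
        = (∑ j ∈ Finset.range N, a ((j : ℤ) - (i : ℕ)) * v j)
          + ∑ t ∈ Finset.range n, a (((N + t : ℕ) : ℤ) - (i : ℕ)) * v (N + t) :=
      Finset.sum_range_add (fun j => a ((j : ℤ) - (i : ℕ)) * v j) N n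
    have : r i = (∑ j ∈ Finset.range N, a ((j : ℤ) - (i : ℕ)) * v j)
        - ∑ j ∈ Finset.range (N + n), a ((j : ℤ) - (i : ℕ)) * v j := by
      rw [hrdef]
      simp only
      rw [hAv, hvN i, heigc (i : ℕ), hT2, hEsum]
      ring
    rw [this, hsplit]
    push_cast
    ring
  -- relation to `Y`
  have hYw : ∀ l : Fin n, Y.mulVec wN l
      = ∑ t ∈ Finset.range n, a ((n : ℤ) + t - (l : ℕ)) * v (N + t) := by
    intro l
    rw [Matrix.mulVec, dotProduct,
      ← Fin.sum_univ_eq_sum_range (fun t => a ((n : ℤ) + t - (l : ℕ)) * v (N + t)) n]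
    refine Finset.sum_congr rfl fun t _ => ?_
    rw [hY l t, hwN t]
    by_cases h : (t : ℕ) ≤ (l : ℕ)
    · rw [if_pos h]
      congr 2
      push_cast
      ring
    · rw [if_neg h, hsupp _ (Or.inr (by push_cast; omega)), zero_mul]
  have hrzero : ∀ i : Fin N, (i : ℕ) < N - n → r i = 0 := by
    intro i hi
    rw [hr i]
    rw [neg_eq_zero]
    refine Finset.sum_eq_zero fun t ht => ?_
    have ht' : t < n := Finset.mem_range.mp ht
    rw [hsupp _ (Or.inr (by push_cast; omega)), zero_mul]
  have hrlast : ∀ l : Fin n, r ⟨N - n + (l : ℕ), by omega⟩ = -(Y.mulVec wN l) := by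
    intro l
    rw [hr, hYw, neg_inj]
    refine Finset.sum_congr rfl fun t _ => ?_
    congr 2
    have hl : (l : ℕ) < n := l.isLt
    push_cast [Nat.cast_sub hNn.le]
    ring
  -- equality of residual norms
  have hsum : ∑ i : Fin N, ‖r i‖ ^ 2 = ∑ l : Fin n, ‖Y.mulVec wN l‖ ^ 2 := by
    set g : ℕ → ℝ := fun k => if h : k < N then ‖r ⟨k, h⟩‖ ^ 2 else 0 with hg
    have h1 : ∑ i : Fin N, ‖r i‖ ^ 2 = ∑ k ∈ Finset.range N, g k := by
      rw [← Fin.sum_univ_eq_sum_range g N]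
      refine Finset.sum_congr rfl fun i _ => ?_
      rw [hg]
      simp [i.isLt]
    rw [h1, ← Nat.sub_add_cancel hNn.le, Finset.sum_range_add]
    have h2 : ∑ k ∈ Finset.range (N - n), g k = 0 := by
      refine Finset.sum_eq_zero fun k hk => ?_
      have hk' : k < N - n := Finset.mem_range.mp hk
      rw [hg]
      have hkN : k < N := by omega
      simp only [dif_pos hkN]
      rw [hrzero ⟨k, hkN⟩ hk']
      simp
    rw [h2, zero_add]
    rw [← Fin.sum_univ_eq_sum_range (fun t => g (N - n + t)) n]
    refine Finset.sum_congr rfl fun l _ => ?_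
    have hl : N - n + (l : ℕ) < N := by omega
    rw [hg]
    simp only [dif_pos hl]
    rw [hrlast l]
    simp
  -- assemble
  set vE := (WithLp.equiv 2 (Fin N → ℂ)).symm vN with hvE
  set wE := (WithLp.equiv 2 (Fin n → ℂ)).symm wN with hwE
  have hvE0 : vE ≠ 0 := by
    intro h
    apply hvN0
    have := congrArg (WithLp.equiv 2 (Fin N → ℂ)) h
    simpa [hvE] using this
  obtain ⟨μ, hμ, hle⟩ := herm_residual AN hherm lam vE hvE0
  refine ⟨μ, hμ, ?_⟩
  have hrE : Matrix.toEuclideanCLM (𝕜 := ℂ) AN vE - lam • vE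
      = (WithLp.equiv 2 (Fin N → ℂ)).symm r := by
    apply (WithLp.equiv 2 (Fin N → ℂ)).injective
    funext i
    simp [hvE, hrdef, Matrix.toLin'_apply]
  have hYwE : Matrix.toEuclideanCLM (𝕜 := ℂ) Y wE
      = (WithLp.equiv 2 (Fin n → ℂ)).symm (Y.mulVec wN) := by
    rw [hwE, WithLp.equiv_symm_apply, Matrix.toEuclideanCLM_toLp]
  have hnorm_r : ‖(WithLp.equiv 2 (Fin N → ℂ)).symm r‖
      = ‖Matrix.toEuclideanCLM (𝕜 := ℂ) Y wE‖ := by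
    rw [hYwE, EuclideanSpace.norm_eq, EuclideanSpace.norm_eq]
    congr 1
    all_goals simpa using hsum
  have hbound : ‖lam - μ‖ * ‖vE‖
      ≤ ‖Matrix.toEuclideanCLM (𝕜 := ℂ) Y‖ * ‖wE‖ := by
    calc ‖lam - μ‖ * ‖vE‖
        ≤ ‖Matrix.toEuclideanCLM (𝕜 := ℂ) AN vE - lam • vE‖ := hle
      _ = ‖Matrix.toEuclideanCLM (𝕜 := ℂ) Y wE‖ := by rw [hrE, hnorm_r]
      _ ≤ ‖Matrix.toEuclideanCLM (𝕜 := ℂ) Y‖ * ‖wE‖ :=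
          (Matrix.toEuclideanCLM (𝕜 := ℂ) Y).le_opNorm wE
  have hvpos : 0 < ‖vE‖ := norm_pos_iff.mpr hvE0
  rw [le_div_iff₀ hvpos]
  exact hbound
end
end
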